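/- arXiv:2506.10838 — 5 statements merged into one kernel-verified Lean document; each statement's English description precedes it below -/
import Mathlib

section
/- Let f and g be coprime integer polynomials of positive degree. Then B(f,g) = |Res(f,g)| if and only if r(f,g) = |Res(f,g)|. -/
open Polynomial

/-- The Sylvester matrix of two integer polynomials. -/
noncomputable def sylvesterMatrix (f g : Polynomial ℤ) :
    Matrix (Fin (g.natDegree + f.natDegree)) (Fin (g.natDegree + f.natDegree)) ℤ :=
  Matrix.of fun i j =>
    if (i : ℕ) < g.natDegree then
      if (i : ℕ) ≤ (j : ℕ) ∧ (j : ℕ) ≤ (i : ℕ) + f.natDegree then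
        f.coeff (f.natDegree + i - j)
      else 0
    else
      if (i : ℕ) - g.natDegree ≤ (j : ℕ) ∧ (j : ℕ) ≤ (i : ℕ) - g.natDegree + g.natDegree then
        g.coeff (g.natDegree + ((i : ℕ) - g.natDegree) - j)
      else 0

/-- The resultant of two integer polynomials, as the determinant of their Sylvester matrix. -/
noncomputable def res (f g : Polynomial ℤ) : ℤ := (sylvesterMatrix f g).det

/-- `B` is a positive common denominator for the (unique) Bezout cofactors `p, q` in `ℚ[x]`
with `deg p < deg g`, `deg q < deg f` and `p*f + q*g = 1`, i.e. `B*p, B*q` lie in `ℤ[x]`. -/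
def IsBezoutDenom (f g : Polynomial ℤ) (B : ℤ) : Prop :=
  0 < B ∧ ∃ p q : Polynomial ℚ,
    p.degree < (g.map (Int.castRingHom ℚ)).degree ∧
    q.degree < (f.map (Int.castRingHom ℚ)).degree ∧
    p * f.map (Int.castRingHom ℚ) + q * g.map (Int.castRingHom ℚ) = 1 ∧
    (∃ P : Polynomial ℤ, P.map (Int.castRingHom ℚ) = Polynomial.C (B : ℚ) * p) ∧
    (∃ Q : Polynomial ℤ, Q.map (Int.castRingHom ℚ) = Polynomial.C (B : ℚ) * q)


section Generic
variable {A : Type*} [CommRing A]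

noncomputable def polyP (m n : ℕ) (w : Fin (m + n) → A) : A[X] :=
  ∑ i : Fin (m + n), if (i : ℕ) < m then C (w i) * X ^ (m - 1 - (i : ℕ)) else 0

noncomputable def polyQ (m n : ℕ) (w : Fin (m + n) → A) : A[X] :=
  ∑ i : Fin (m + n), if m ≤ (i : ℕ) then C (w i) * X ^ (m + n - 1 - (i : ℕ)) else 0

lemma polyP_degree (m n : ℕ) (w : Fin (m + n) → A) :
    (polyP m n w).degree ≤ ((m - 1 : ℕ) : WithBot ℕ) := by
  refine (degree_sum_le _ _).trans ?_
  refine Finset.sup_le fun i _ => ?_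
  split_ifs with h
  · refine (degree_C_mul_X_pow_le _ _).trans ?_
    have : (m - 1 - (i : ℕ)) ≤ m - 1 := by omega
    exact_mod_cast this
  · simp

lemma polyQ_degree (m n : ℕ) (w : Fin (m + n) → A) :
    (polyQ m n w).degree ≤ ((n - 1 : ℕ) : WithBot ℕ) := by
  refine (degree_sum_le _ _).trans ?_
  refine Finset.sup_le fun i _ => ?_
  split_ifs with h
  · refine (degree_C_mul_X_pow_le _ _).trans ?_
    have : (m + n - 1 - (i : ℕ)) ≤ n - 1 := by omega
    exact_mod_cast this
  · simp

lemma polyP_coeff (m n : ℕ) (w : Fin (m + n) → A) (i : Fin (m + n)) (hi : (i : ℕ) < m) :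
    (polyP m n w).coeff (m - 1 - (i : ℕ)) = w i := by
  rw [polyP, finset_sum_coeff]
  rw [Finset.sum_eq_single i]
  · rw [if_pos hi, coeff_C_mul, coeff_X_pow, if_pos rfl, mul_one]
  · intro j _ hne
    split_ifs with hj
    · rw [coeff_C_mul, coeff_X_pow]
      rw [if_neg, mul_zero]
      intro h
      exact hne (Fin.ext (by omega))
    · simp
  · simp

lemma polyQ_coeff (m n : ℕ) (w : Fin (m + n) → A) (i : Fin (m + n)) (hi : m ≤ (i : ℕ)) :
    (polyQ m n w).coeff (m + n - 1 - (i : ℕ)) = w i := by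
  rw [polyQ, finset_sum_coeff]
  rw [Finset.sum_eq_single i]
  · rw [if_pos hi, coeff_C_mul, coeff_X_pow, if_pos rfl, mul_one]
  · intro j _ hne
    split_ifs with hj
    · rw [coeff_C_mul, coeff_X_pow]
      rw [if_neg, mul_zero]
      intro h
      have := j.isLt
      have := i.isLt
      exact hne (Fin.ext (by omega))
    · simp
  · simp

lemma polyP_coeff_dvd (m n : ℕ) (w : Fin (m + n) → A) (d : A)
    (hw : ∀ i, d ∣ w i) (t : ℕ) : d ∣ (polyP m n w).coeff t := by
  rw [polyP, finset_sum_coeff]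
  refine Finset.dvd_sum fun i _ => ?_
  split_ifs with h
  · rw [coeff_C_mul, coeff_X_pow]
    split_ifs
    · simpa using hw i
    · simp
  · simp

lemma polyQ_coeff_dvd (m n : ℕ) (w : Fin (m + n) → A) (d : A)
    (hw : ∀ i, d ∣ w i) (t : ℕ) : d ∣ (polyQ m n w).coeff t := by
  rw [polyQ, finset_sum_coeff]
  refine Finset.dvd_sum fun i _ => ?_
  split_ifs with h
  · rw [coeff_C_mul, coeff_X_pow]
    split_ifs
    · simpa using hw i
    · simp
  · simp

lemma key_translate (m n : ℕ) (hm : 0 < m) (hn : 0 < n)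
    (F G : A[X]) (hF : F.natDegree ≤ n) (hG : G.natDegree ≤ m)
    (M : Matrix (Fin (m + n)) (Fin (m + n)) A)
    (hM : ∀ i j : Fin (m + n), M i j =
      if (i : ℕ) < m then
        (if (i : ℕ) ≤ (j : ℕ) ∧ (j : ℕ) ≤ (i : ℕ) + n then F.coeff (n + (i : ℕ) - (j : ℕ)) else 0)
      else
        (if (i : ℕ) - m ≤ (j : ℕ) ∧ (j : ℕ) ≤ (i : ℕ) - m + m then
          G.coeff (m + ((i : ℕ) - m) - (j : ℕ)) else 0))
    (w : Fin (m + n) → A) (j : Fin (m + n)) :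
    (polyP m n w * F + polyQ m n w * G).coeff (m + n - 1 - (j : ℕ)) =
      Matrix.vecMul w M j := by
  have hj := j.isLt
  rw [coeff_add, polyP, polyQ, Finset.sum_mul, Finset.sum_mul,
    finset_sum_coeff, finset_sum_coeff, ← Finset.sum_add_distrib]
  rw [Matrix.vecMul, dotProduct]
  refine Finset.sum_congr rfl fun i _ => ?_
  have hi := i.isLt
  rw [hM]
  by_cases h : (i : ℕ) < m
  · rw [if_pos h, if_neg (by omega), zero_mul, coeff_zero, add_zero, if_pos h]
    have hre : C (w i) * X ^ (m - 1 - (i : ℕ)) * F = C (w i) * (F * X ^ (m - 1 - (i : ℕ))) := by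
      ring
    rw [hre, coeff_C_mul, coeff_mul_X_pow']
    by_cases h1 : (i : ℕ) ≤ (j : ℕ) ∧ (j : ℕ) ≤ (i : ℕ) + n
    · rw [if_pos h1, if_pos (by omega)]
      have harg : m + n - 1 - (j : ℕ) - (m - 1 - (i : ℕ)) = n + (i : ℕ) - (j : ℕ) := by omega
      rw [harg]
    · rw [if_neg h1]
      by_cases h2 : (j : ℕ) < (i : ℕ)
      · rw [if_pos (by omega)]
        have hz : F.coeff (m + n - 1 - (j : ℕ) - (m - 1 - (i : ℕ))) = 0 :=
          coeff_eq_zero_of_natDegree_lt (by omega)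
        rw [hz, mul_zero]
      · rw [if_neg (by omega), mul_zero]
  · rw [if_neg h, if_pos (by omega), zero_mul, coeff_zero, zero_add, if_neg h]
    have hre : C (w i) * X ^ (m + n - 1 - (i : ℕ)) * G
        = C (w i) * (G * X ^ (m + n - 1 - (i : ℕ))) := by ring
    rw [hre, coeff_C_mul, coeff_mul_X_pow']
    by_cases h1 : (i : ℕ) - m ≤ (j : ℕ) ∧ (j : ℕ) ≤ (i : ℕ) - m + m
    · rw [if_pos h1, if_pos (by omega)]
      have harg : m + n - 1 - (j : ℕ) - (m + n - 1 - (i : ℕ))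
          = m + ((i : ℕ) - m) - (j : ℕ) := by omega
      rw [harg]
    · rw [if_neg h1]
      by_cases h2 : (j : ℕ) < (i : ℕ) - m
      · rw [if_pos (by omega)]
        have hz : G.coeff (m + n - 1 - (j : ℕ) - (m + n - 1 - (i : ℕ))) = 0 :=
          coeff_eq_zero_of_natDegree_lt (by omega)
        rw [hz, mul_zero]
      · rw [if_neg (by omega), mul_zero]

lemma combo_degree_lt (m n : ℕ) (hm : 0 < m) (hn : 0 < n)
    (F G : A[X]) (hF : F.natDegree ≤ n) (hG : G.natDegree ≤ m)
    (w : Fin (m + n) → A) :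
    (polyP m n w * F + polyQ m n w * G).degree < ((m + n : ℕ) : WithBot ℕ) := by
  refine (degree_add_le _ _).trans_lt (max_lt ?_ ?_)
  · refine (degree_mul_le _ _).trans_lt ?_
    calc (polyP m n w).degree + F.degree ≤ ((m - 1 : ℕ) : WithBot ℕ) + (n : ℕ) := by
          exact add_le_add (polyP_degree m n w) (degree_le_natDegree.trans (by exact_mod_cast hF))
      _ < ((m + n : ℕ) : WithBot ℕ) := by
          rw [← Nat.cast_add]
          exact_mod_cast (by omega : m - 1 + n < m + n)
  · refine (degree_mul_le _ _).trans_lt ?_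
    calc (polyQ m n w).degree + G.degree ≤ ((n - 1 : ℕ) : WithBot ℕ) + (m : ℕ) := by
          exact add_le_add (polyQ_degree m n w) (degree_le_natDegree.trans (by exact_mod_cast hG))
      _ < ((m + n : ℕ) : WithBot ℕ) := by
          rw [← Nat.cast_add]
          exact_mod_cast (by omega : n - 1 + m < m + n)

end Generic

section Syl

variable (f g : ℤ[X])

lemma sylvester_apply (i j : Fin (g.natDegree + f.natDegree)) :
    sylvesterMatrix f g i j =
      if (i : ℕ) < g.natDegree then
        (if (i : ℕ) ≤ (j : ℕ) ∧ (j : ℕ) ≤ (i : ℕ) + f.natDegree then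
          f.coeff (f.natDegree + (i : ℕ) - (j : ℕ)) else 0)
      else
        (if (i : ℕ) - g.natDegree ≤ (j : ℕ) ∧
            (j : ℕ) ≤ (i : ℕ) - g.natDegree + g.natDegree then
          g.coeff (g.natDegree + ((i : ℕ) - g.natDegree) - (j : ℕ)) else 0) := rfl

lemma exists_bezout (hf : 0 < f.natDegree) (hg : 0 < g.natDegree) :
    ∃ P Q : ℤ[X],
      P.degree ≤ ((g.natDegree - 1 : ℕ) : WithBot ℕ) ∧
      Q.degree ≤ ((f.natDegree - 1 : ℕ) : WithBot ℕ) ∧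
      P * f + Q * g = C (res f g) ∧
      (∀ d : ℤ, d ∣ f.leadingCoeff → d ∣ g.leadingCoeff →
        (∀ t, d ∣ P.coeff t) ∧ (∀ t, d ∣ Q.coeff t)) := by
  classical
  set m := g.natDegree with hm
  set n := f.natDegree with hn
  set S := sylvesterMatrix f g with hS
  have hmn : 1 ≤ m + n := by omega
  set e : Fin (m + n) → ℤ := Pi.single ⟨m + n - 1, by omega⟩ 1 with he
  set w : Fin (m + n) → ℤ := Matrix.cramer S.transpose e with hw
  have hvm : Matrix.vecMul w S = (res f g) • e := by
    rw [← Matrix.mulVec_transpose, hw, Matrix.mulVec_cramer, Matrix.det_transpose]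
    rfl
  have hkey := fun j => key_translate m n hg hf f g le_rfl le_rfl S
    (sylvester_apply f g) w j
  refine ⟨polyP m n w, polyQ m n w, polyP_degree m n w, polyQ_degree m n w, ?_, ?_⟩
  · apply Polynomial.ext
    intro t
    by_cases ht : t < m + n
    · have h2 := hkey ⟨m + n - 1 - t, by omega⟩
      simp only [Fin.val_mk] at h2
      rw [(show m + n - 1 - (m + n - 1 - t) = t by omega)] at h2
      rw [h2, hvm]
      rw [Pi.smul_apply, he, Pi.single_apply, coeff_C]
      by_cases ht0 : t = 0
      · rw [if_pos (by apply Fin.ext; simp only [Fin.val_mk]; omega), if_pos ht0]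
        simp
      · rw [if_neg (show ¬_ from fun hcon => ht0 (by
          have h3 := congrArg Fin.val hcon
          simp only [Fin.val_mk] at h3
          omega)), if_neg ht0]
        simp
    · rw [coeff_eq_zero_of_degree_lt, coeff_eq_zero_of_degree_lt]
      · exact (degree_C_le).trans_lt (by exact_mod_cast (by omega : (0 : ℕ) < t) : ((0 : ℕ) : WithBot ℕ) < (t : ℕ))
      · exact (combo_degree_lt m n hg hf f g le_rfl le_rfl w).trans_le
          (by exact_mod_cast (by omega : m + n ≤ t))
  · intro d hdF hdG
    have hdw : ∀ i, d ∣ w i := by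
      intro i
      rw [hw, Matrix.cramer_apply]
      set M := (S.transpose).updateCol i e with hM
      set ν := d.natAbs with hν
      have hdet0 : (M.map (Int.castRingHom (ZMod ν))).det = 0 := by
        apply Matrix.det_eq_zero_of_row_eq_zero (⟨0, by omega⟩ : Fin (m + n))
        intro c
        rw [Matrix.map_apply, hM, Matrix.updateCol_apply]
        have hcast : ∀ z : ℤ, d ∣ z → ((z : ZMod ν) = 0) := by
          intro z hz
          rw [ZMod.intCast_zmod_eq_zero_iff_dvd, hν, Int.natCast_natAbs]
          exact (abs_dvd _ _).2 hz
        by_cases hc : c = i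
        · rw [if_pos hc, he, Pi.single_apply, if_neg (show ¬_ from fun hcon => by
            have h3 := congrArg Fin.val hcon
            simp only [Fin.val_mk] at h3
            omega)]
          simp
        · rw [if_neg hc, Matrix.transpose_apply, hS, sylvester_apply]
          simp only []
          by_cases h1 : (c : ℕ) < m
          · rw [if_pos h1]
            by_cases h2 : (c : ℕ) = 0
            · rw [if_pos (by omega)]
              have harg : n + (c : ℕ) - 0 = f.natDegree := by omega
              rw [harg]
              exact hcast _ hdF
            · rw [if_neg (by omega)]
              simp
          · rw [if_neg h1]
            by_cases h2 : (c : ℕ) = m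
            · rw [if_pos (by omega)]
              have harg : m + ((c : ℕ) - m) - 0 = g.natDegree := by omega
              rw [harg]
              exact hcast _ hdG
            · rw [if_neg (by omega)]
              simp
      have hcast2 : ((M.det : ZMod ν)) = 0 := by
        have hh := RingHom.map_det (Int.castRingHom (ZMod ν)) M
        rw [show ((M.det : ZMod ν)) = (Int.castRingHom (ZMod ν)) M.det from rfl, hh]
        exact hdet0
      rw [ZMod.intCast_zmod_eq_zero_iff_dvd, hν, Int.natCast_natAbs] at hcast2
      exact (abs_dvd _ _).1 hcast2
    exact ⟨polyP_coeff_dvd m n w d hdw, polyQ_coeff_dvd m n w d hdw⟩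

end Syl

section More

lemma bezout_unique {K : Type*} [Field K] {F G X₁ Y₁ X₂ Y₂ : K[X]}
    (hcop : IsCoprime F G) (h1 : X₁.degree < G.degree) (h2 : X₂.degree < G.degree)
    (he : X₁ * F + Y₁ * G = X₂ * F + Y₂ * G) : X₁ = X₂ ∧ Y₁ = Y₂ := by
  have hG0 : G ≠ 0 := by
    intro h
    rw [h, degree_zero] at h1
    exact not_lt_bot h1
  have hdvd : G ∣ (X₁ - X₂) := by
    refine (hcop.symm).dvd_of_dvd_mul_right (⟨Y₂ - Y₁, by linear_combination he⟩ : G ∣ (X₁ - X₂) * F)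
  have hXX : X₁ - X₂ = 0 := by
    by_contra hne
    have hle := Polynomial.degree_le_of_dvd hdvd hne
    have hlt : (X₁ - X₂).degree < G.degree := lt_of_le_of_lt (degree_sub_le _ _) (max_lt h1 h2)
    exact absurd hle (not_le_of_gt hlt)
  have hX : X₁ = X₂ := sub_eq_zero.1 hXX
  refine ⟨hX, ?_⟩
  have hY : (Y₂ - Y₁) * G = 0 := by
    have : (X₁ - X₂) * F = (Y₂ - Y₁) * G := by linear_combination he
    rw [← this, hXX, zero_mul]
  rcases mul_eq_zero.1 hY with h | h
  · exact (sub_eq_zero.1 h).symm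
  · exact absurd h hG0

lemma mkDenom (f g : ℤ[X]) (hf : 0 < f.natDegree) (hg : 0 < g.natDegree)
    (P Q : ℤ[X]) (s : ℤ) (hs : s ≠ 0)
    (hdP : P.degree < (g.natDegree : WithBot ℕ)) (hdQ : Q.degree < (f.natDegree : WithBot ℕ))
    (heq : P * f + Q * g = C s) : IsBezoutDenom f g |s| := by
  have hg0 : g ≠ 0 := fun h => by simp [h] at hg
  have hf0 : f ≠ 0 := fun h => by simp [h] at hf
  have hsQ : (s : ℚ) ≠ 0 := Int.cast_ne_zero.2 hs
  have hinj : Function.Injective (Int.castRingHom ℚ) := Int.cast_injective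
  refine ⟨abs_pos.2 hs, C (s : ℚ)⁻¹ * P.map (Int.castRingHom ℚ),
    C (s : ℚ)⁻¹ * Q.map (Int.castRingHom ℚ), ?_, ?_, ?_, ?_, ?_⟩
  · calc (C (s : ℚ)⁻¹ * P.map (Int.castRingHom ℚ)).degree
        ≤ (P.map (Int.castRingHom ℚ)).degree := by
          refine (degree_mul_le _ _).trans ?_
          refine le_trans (add_le_add degree_C_le le_rfl) ?_
          rw [zero_add]
      _ ≤ P.degree := degree_map_le
      _ < (g.natDegree : WithBot ℕ) := hdP
      _ = (g.map (Int.castRingHom ℚ)).degree := by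
          rw [degree_map_eq_of_injective hinj, degree_eq_natDegree hg0]
  · calc (C (s : ℚ)⁻¹ * Q.map (Int.castRingHom ℚ)).degree
        ≤ (Q.map (Int.castRingHom ℚ)).degree := by
          refine (degree_mul_le _ _).trans ?_
          refine le_trans (add_le_add degree_C_le le_rfl) ?_
          rw [zero_add]
      _ ≤ Q.degree := degree_map_le
      _ < (f.natDegree : WithBot ℕ) := hdQ
      _ = (f.map (Int.castRingHom ℚ)).degree := by
          rw [degree_map_eq_of_injective hinj, degree_eq_natDegree hf0]
  · have hmap : P.map (Int.castRingHom ℚ) * f.map (Int.castRingHom ℚ) +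
        Q.map (Int.castRingHom ℚ) * g.map (Int.castRingHom ℚ) = C (s : ℚ) := by
      rw [← Polynomial.map_mul, ← Polynomial.map_mul, ← Polynomial.map_add, heq,
        Polynomial.map_C]
      norm_num
    calc C (s : ℚ)⁻¹ * P.map (Int.castRingHom ℚ) * f.map (Int.castRingHom ℚ) +
          C (s : ℚ)⁻¹ * Q.map (Int.castRingHom ℚ) * g.map (Int.castRingHom ℚ)
        = C (s : ℚ)⁻¹ * (P.map (Int.castRingHom ℚ) * f.map (Int.castRingHom ℚ) +
            Q.map (Int.castRingHom ℚ) * g.map (Int.castRingHom ℚ)) := by ring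
      _ = C (s : ℚ)⁻¹ * C (s : ℚ) := by rw [hmap]
      _ = 1 := by rw [← C_mul, inv_mul_cancel₀ hsQ, C_1]
  · refine ⟨C (if 0 ≤ s then (1 : ℤ) else -1) * P, ?_⟩
    rw [Polynomial.map_mul, Polynomial.map_C]
    have hes : ((Int.castRingHom ℚ) (if 0 ≤ s then (1 : ℤ) else -1)) =
        ((|s| : ℤ) : ℚ) * (s : ℚ)⁻¹ := by
      split_ifs with h0
      · rw [abs_of_nonneg h0]
        push_cast
        rw [mul_inv_cancel₀ hsQ]
        norm_num
      · rw [abs_of_neg (lt_of_not_ge h0)]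
        push_cast
        field_simp
        simp
    rw [hes, C_mul, mul_assoc]
  · refine ⟨C (if 0 ≤ s then (1 : ℤ) else -1) * Q, ?_⟩
    rw [Polynomial.map_mul, Polynomial.map_C]
    have hes : ((Int.castRingHom ℚ) (if 0 ≤ s then (1 : ℤ) else -1)) =
        ((|s| : ℤ) : ℚ) * (s : ℚ)⁻¹ := by
      split_ifs with h0
      · rw [abs_of_nonneg h0]
        push_cast
        rw [mul_inv_cancel₀ hsQ]
        norm_num
      · rw [abs_of_neg (lt_of_not_ge h0)]
        push_cast
        field_simp
        simp
    rw [hes, C_mul, mul_assoc]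

end More

section Local

lemma localC (p : ℕ) [hp : Fact p.Prime] (f g u v P Q : ℤ[X]) (R n : ℤ)
    (hf : 0 < f.natDegree) (hg : 0 < g.natDegree)
    (hcop : IsCoprime (f.map (Int.castRingHom ℚ)) (g.map (Int.castRingHom ℚ)))
    (hdP : P.degree < (g.natDegree : WithBot ℕ))
    (hPQ : P * f + Q * g = C R) (huv : u * f + v * g = C n)
    (hG : ¬ (p : ℤ) ∣ g.leadingCoeff)
    (hs : (∃ i, ¬ (p : ℤ) ∣ P.coeff i) ∨ (∃ i, ¬ (p : ℤ) ∣ Q.coeff i))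
    (hR : R ≠ 0) (j : ℕ) (hj : (p : ℤ) ^ j ∣ R) : (p : ℤ) ^ j ∣ n := by
  classical
  have hg0 : g ≠ 0 := fun h => by simp [h] at hg
  have hf0 : f ≠ 0 := fun h => by simp [h] at hf
  set ι : ℤ →+* ℤ_[p] := Int.castRingHom ℤ_[p] with hι
  set κ : ℤ_[p] →+* ℚ_[p] := PadicInt.Coe.ringHom with hκ
  have hκinj : Function.Injective κ := Subtype.coe_injective
  set ι2 : ℤ →+* ℚ_[p] := Int.castRingHom ℚ_[p] with hι2
  have hι2inj : Function.Injective ι2 := Int.cast_injective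
  have hκι : κ.comp ι = ι2 := RingHom.ext_int _ _
  set fp := f.map ι with hfp
  set gp := g.map ι with hgp
  set up := u.map ι with hup
  set vp := v.map ι with hvp
  -- the leading coefficient of `g` is a unit in ℤ_[p]
  have hGu : IsUnit (ι g.leadingCoeff) := by
    rw [PadicInt.isUnit_iff]
    refine le_antisymm (PadicInt.norm_le_one _) (not_lt.1 fun hlt => hG ?_)
    exact (PadicInt.norm_int_lt_one_iff_dvd _).1 hlt
  have hGne0 : ι g.leadingCoeff ≠ 0 := hGu.ne_zero
  have hlcgp : gp.leadingCoeff = ι g.leadingCoeff :=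
    leadingCoeff_map_of_leadingCoeff_ne_zero ι hGne0
  have hndgp : gp.natDegree = g.natDegree := natDegree_map_of_leadingCoeff_ne_zero ι hGne0
  have hgp0 : gp ≠ 0 := fun h => hGne0 (by rw [← hlcgp, h, leadingCoeff_zero])
  set a : ℤ_[p] := ((hGu.unit⁻¹ : ℤ_[p]ˣ) : ℤ_[p]) with ha
  have ha0 : a ≠ 0 := Units.ne_zero _
  set gm := gp * C a with hgm
  have hmonic : gm.Monic := by
    apply monic_mul_C_of_leadingCoeff_mul_eq_one
    rw [hlcgp, ← hGu.unit_spec, ha]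
    exact hGu.unit.mul_inv
  have hdeg_gm : gm.degree = gp.degree := degree_mul_C ha0
  set ρ := up %ₘ gm with hρdef
  set k := up /ₘ gm with hkdef
  have hdiv : ρ + gm * k = up := modByMonic_add_div up gm
  have hdegρ : ρ.degree < gm.degree := degree_modByMonic_lt up hmonic
  set v' := vp + C a * k * fp with hv'
  have hmapuv : up * fp + vp * gp = C (ι n) := by
    rw [hup, hfp, hvp, hgp, ← Polynomial.map_mul, ← Polynomial.map_mul, ← Polynomial.map_add,
      huv, Polynomial.map_C]
  have hkeyZ : ρ * fp + v' * gp = C (ι n) := by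
    rw [hv']
    linear_combination hmapuv + fp * hdiv - k * fp * hgm
  -- move to ℚ_[p]
  set fq := f.map ι2 with hfq
  set gq := g.map ι2 with hgq
  set Pq := P.map ι2 with hPq
  set Qq := Q.map ι2 with hQq
  have hmapPQ : Pq * fq + Qq * gq = C (ι2 R) := by
    rw [hPq, hfq, hQq, hgq, ← Polynomial.map_mul, ← Polynomial.map_mul, ← Polynomial.map_add,
      hPQ, Polynomial.map_C]
  have hRq : ι2 R ≠ 0 := fun h => hR (hι2inj (by rwa [map_zero]))
  set X₂ := C (ι2 n * (ι2 R)⁻¹) * Pq with hX₂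
  set Y₂ := C (ι2 n * (ι2 R)⁻¹) * Qq with hY₂
  have hcan : X₂ * fq + Y₂ * gq = C (ι2 n) := by
    calc X₂ * fq + Y₂ * gq = C (ι2 n * (ι2 R)⁻¹) * (Pq * fq + Qq * gq) := by
          rw [hX₂, hY₂]; ring
      _ = C (ι2 n * (ι2 R)⁻¹) * C (ι2 R) := by rw [hmapPQ]
      _ = C (ι2 n) := by rw [← C_mul, mul_assoc, inv_mul_cancel₀ hRq, mul_one]
  have e1 : fp.map κ = fq := by rw [hfp, hfq, Polynomial.map_map, hκι]
  have e2 : gp.map κ = gq := by rw [hgp, hgq, Polynomial.map_map, hκι]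
  have e3 : κ (ι n) = ι2 n := by rw [← hκι]; rfl
  have hρv : (ρ.map κ) * fq + (v'.map κ) * gq = C (ι2 n) := by
    have hmapped := congrArg (Polynomial.map κ) hkeyZ
    rw [Polynomial.map_add, Polynomial.map_mul, Polynomial.map_mul, Polynomial.map_C,
      e1, e2, e3] at hmapped
    exact hmapped
  have hcopq : IsCoprime fq gq := by
    have hmapcop := hcop.map (Polynomial.mapRingHom (algebraMap ℚ ℚ_[p]))
    have e4 : (Polynomial.mapRingHom (algebraMap ℚ ℚ_[p])) (f.map (Int.castRingHom ℚ)) = fq := by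
      rw [Polynomial.coe_mapRingHom, Polynomial.map_map,
        show (algebraMap ℚ ℚ_[p]).comp (Int.castRingHom ℚ) = ι2 from RingHom.ext_int _ _, hfq]
    have e5 : (Polynomial.mapRingHom (algebraMap ℚ ℚ_[p])) (g.map (Int.castRingHom ℚ)) = gq := by
      rw [Polynomial.coe_mapRingHom, Polynomial.map_map,
        show (algebraMap ℚ ℚ_[p]).comp (Int.castRingHom ℚ) = ι2 from RingHom.ext_int _ _, hgq]
    rwa [e4, e5] at hmapcop
  have hdeg_gq : gq.degree = (g.natDegree : WithBot ℕ) := by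
    rw [hgq, degree_map_eq_of_injective hι2inj, degree_eq_natDegree hg0]
  have hdeg_gp : gp.degree = (g.natDegree : WithBot ℕ) := by
    rw [degree_eq_natDegree hgp0, hndgp]
  have hd1 : (ρ.map κ).degree < gq.degree := by
    refine lt_of_le_of_lt degree_map_le ?_
    rw [hdeg_gq]
    rw [hdeg_gm, hdeg_gp] at hdegρ
    exact hdegρ
  have hd2 : X₂.degree < gq.degree := by
    rw [hdeg_gq]
    calc X₂.degree ≤ Pq.degree := by
          rw [hX₂]
          refine (degree_mul_le _ _).trans ?_
          refine le_trans (add_le_add degree_C_le le_rfl) ?_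
          rw [zero_add]
      _ ≤ P.degree := by rw [hPq]; exact degree_map_le
      _ < (g.natDegree : WithBot ℕ) := hdP
  obtain ⟨hXeq, hYeq⟩ := bezout_unique hcopq hd1 hd2 (by rw [hρv, hcan])
  -- coefficient equations in ℤ_[p]
  have hcoeff : ∀ (S : ℤ[X]) (Sq : ℚ_[p][X]) (σ : ℤ_[p][X]), Sq = S.map ι2 →
      σ.map κ = C (ι2 n * (ι2 R)⁻¹) * Sq → ∀ i : ℕ,
      σ.coeff i * ι R = ι n * ι (S.coeff i) := by
    intro S Sq σ hSq hσ i
    apply hκinj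
    rw [map_mul, map_mul]
    have c1 : κ (σ.coeff i) = (σ.map κ).coeff i := (coeff_map κ i).symm
    have c2 : κ (ι R) = ι2 R := by rw [← hκι]; rfl
    have c3 : κ (ι (S.coeff i)) = ι2 (S.coeff i) := by rw [← hκι]; rfl
    rw [c1, c2, e3, c3, hσ, coeff_C_mul, hSq, coeff_map]
    have hre : ι2 n * (ι2 R)⁻¹ * ι2 (S.coeff i) * ι2 R
        = ι2 n * ι2 (S.coeff i) * ((ι2 R)⁻¹ * ι2 R) := by ring
    rw [hre, inv_mul_cancel₀ hRq, mul_one]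
  have main : ∀ (S : ℤ[X]) (σ : ℤ_[p][X]) (i : ℕ),
      σ.coeff i * ι R = ι n * ι (S.coeff i) → ¬ (p : ℤ) ∣ S.coeff i → (p : ℤ) ^ j ∣ n := by
    intro S σ i heq hnd
    have hnormS : ‖ι (S.coeff i)‖ = 1 :=
      le_antisymm (PadicInt.norm_le_one _)
        (not_lt.1 fun hlt => hnd ((PadicInt.norm_int_lt_one_iff_dvd _).1 hlt))
    have hnorms : ‖σ.coeff i‖ * ‖ι R‖ = ‖ι n‖ := by
      rw [← norm_mul, heq, norm_mul, hnormS, mul_one]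
    have hRnorm : ‖ι R‖ ≤ (p : ℝ) ^ (-(j : ℤ)) := PadicInt.norm_int_le_pow_iff_dvd.2 hj
    have hnn : ‖ι n‖ ≤ (p : ℝ) ^ (-(j : ℤ)) := by
      rw [← hnorms]
      calc ‖σ.coeff i‖ * ‖ι R‖ ≤ 1 * ‖ι R‖ := by
            apply mul_le_mul_of_nonneg_right (PadicInt.norm_le_one _) (norm_nonneg _)
        _ = ‖ι R‖ := one_mul _
        _ ≤ (p : ℝ) ^ (-(j : ℤ)) := hRnorm
    exact PadicInt.norm_int_le_pow_iff_dvd.1 hnn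
  rcases hs with ⟨i, hi⟩ | ⟨i, hi⟩
  · exact main P ρ i (hcoeff P Pq ρ hPq hXeq i) hi
  · exact main Q v' i (hcoeff Q Qq v' hQq hYeq i) hi

end Local

section Main

lemma res_ne_zero (f g : ℤ[X]) (hf : 0 < f.natDegree) (hg : 0 < g.natDegree)
    (hcop : IsCoprime (f.map (Int.castRingHom ℚ)) (g.map (Int.castRingHom ℚ))) :
    res f g ≠ 0 := by
  classical
  intro h0
  have hg0 : g ≠ 0 := fun h => by simp [h] at hg
  set m := g.natDegree with hm
  set n := f.natDegree with hn
  set c : ℤ →+* ℚ := Int.castRingHom ℚ with hc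
  set fq := f.map c with hfq
  set gq := g.map c with hgq
  have hgq0 : gq ≠ 0 := (Polynomial.map_ne_zero_iff Int.cast_injective).2 hg0
  set Sq := (sylvesterMatrix f g).map c with hSq
  have hdet : Sq.det = 0 := by
    have hres : (sylvesterMatrix f g).det = 0 := h0
    rw [hSq, show (sylvesterMatrix f g).map ⇑c = c.mapMatrix (sylvesterMatrix f g) from rfl,
      ← RingHom.map_det, hres, map_zero]
  obtain ⟨w, hw0, hw⟩ := (Matrix.exists_vecMul_eq_zero_iff).2 hdet
  have hMq : ∀ i j : Fin (m + n), Sq i j =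
      if (i : ℕ) < m then
        (if (i : ℕ) ≤ (j : ℕ) ∧ (j : ℕ) ≤ (i : ℕ) + n then fq.coeff (n + (i : ℕ) - (j : ℕ)) else 0)
      else
        (if (i : ℕ) - m ≤ (j : ℕ) ∧ (j : ℕ) ≤ (i : ℕ) - m + m then
          gq.coeff (m + ((i : ℕ) - m) - (j : ℕ)) else 0) := by
    intro i j
    rw [hSq, Matrix.map_apply, sylvester_apply]
    split_ifs <;> first | rfl | simp [hfq, hgq, coeff_map, hm, hn]
  have hndf : fq.natDegree ≤ n := natDegree_map_le
  have hndg : gq.natDegree ≤ m := natDegree_map_le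
  have hkey := fun j => key_translate m n hg hf fq gq hndf hndg Sq hMq w j
  have hE0 : polyP m n w * fq + polyQ m n w * gq = 0 := by
    apply Polynomial.ext
    intro t
    rw [coeff_zero]
    by_cases ht : t < m + n
    · have h2 := hkey ⟨m + n - 1 - t, by omega⟩
      simp only [Fin.val_mk] at h2
      rw [(show m + n - 1 - (m + n - 1 - t) = t by omega)] at h2
      rw [h2, hw]
      simp
    · exact coeff_eq_zero_of_degree_lt ((combo_degree_lt m n hg hf fq gq hndf hndg w).trans_le
        (by exact_mod_cast (by omega : m + n ≤ t)))
  obtain ⟨aa, bb, hab⟩ := hcop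
  have hdvd : gq ∣ polyP m n w :=
    ⟨bb * polyP m n w - aa * polyQ m n w, by linear_combination aa * hE0 - polyP m n w * hab⟩
  have hdegP : (polyP m n w).degree < gq.degree := by
    calc (polyP m n w).degree ≤ ((m - 1 : ℕ) : WithBot ℕ) := polyP_degree m n w
      _ < (m : ℕ) := by exact_mod_cast (by omega : m - 1 < m)
      _ = gq.degree := by
          rw [hgq, degree_map_eq_of_injective Int.cast_injective, degree_eq_natDegree hg0]
  have hP0 : polyP m n w = 0 := Polynomial.eq_zero_of_dvd_of_degree_lt hdvd hdegP
  have hQ0 : polyQ m n w = 0 := by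
    rw [hP0, zero_mul, zero_add] at hE0
    rcases mul_eq_zero.1 hE0 with h | h
    · exact h
    · exact absurd h hgq0
  apply hw0
  funext i
  rw [Pi.zero_apply]
  by_cases hi : (i : ℕ) < m
  · rw [← polyP_coeff m n w i hi, hP0, coeff_zero]
  · rw [← polyQ_coeff m n w i (not_lt.1 hi), hQ0, coeff_zero]

theorem statement_15 (f g : Polynomial ℤ)
    (hf : 0 < f.natDegree) (hg : 0 < g.natDegree)
    (hcop : IsCoprime (f.map (Int.castRingHom ℚ)) (g.map (Int.castRingHom ℚ)))
    (r : ℤ) (hrpos : 0 < r)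
    (hrmem : ∃ u v : Polynomial ℤ, u * f + v * g = Polynomial.C r)
    (hrmin : ∀ s : ℤ, 0 < s →
      (∃ u v : Polynomial ℤ, u * f + v * g = Polynomial.C s) → r ≤ s)
    (B : ℤ) (hB : IsBezoutDenom f g B)
    (hBmin : ∀ B' : ℤ, IsBezoutDenom f g B' → B ≤ B') :
    B = |res f g| ↔ r = |res f g| := by
  classical
  obtain ⟨P₀, Q₀, hdP₀, hdQ₀, hPQ₀, hcorner⟩ := exists_bezout f g hf hg
  have hR0 : res f g ≠ 0 := res_ne_zero f g hf hg hcop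
  set R := res f g with hRdef
  have hdP : P₀.degree < (g.natDegree : WithBot ℕ) :=
    hdP₀.trans_lt (by exact_mod_cast (by omega : g.natDegree - 1 < g.natDegree))
  have hdQ : Q₀.degree < (f.natDegree : WithBot ℕ) :=
    hdQ₀.trans_lt (by exact_mod_cast (by omega : f.natDegree - 1 < f.natDegree))
  have hDpos : (0 : ℤ) < |R| := abs_pos.2 hR0
  -- |R| is in the ideal
  have hDmem : ∃ u v : ℤ[X], u * f + v * g = C |R| := by
    refine ⟨C (if 0 ≤ R then (1 : ℤ) else -1) * P₀, C (if 0 ≤ R then (1 : ℤ) else -1) * Q₀, ?_⟩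
    have : C (if 0 ≤ R then (1 : ℤ) else -1) * P₀ * f + C (if 0 ≤ R then (1 : ℤ) else -1) * Q₀ * g
        = C (if 0 ≤ R then (1 : ℤ) else -1) * (P₀ * f + Q₀ * g) := by ring
    rw [this, hPQ₀, ← C_mul]
    congr 1
    split_ifs with h0
    · rw [one_mul, abs_of_nonneg h0]
    · rw [abs_of_neg (lt_of_not_ge h0)]
      ring
  have hrleD : r ≤ |R| := hrmin _ hDpos hDmem
  have hDdenom : IsBezoutDenom f g |R| := mkDenom f g hf hg P₀ Q₀ R hR0 hdP hdQ hPQ₀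
  have hBleD : B ≤ |R| := hBmin _ hDdenom
  have hrleB : r ≤ B := by
    obtain ⟨hBpos, pp, qq, _, _, hpq, ⟨P, hP⟩, ⟨Q, hQ⟩⟩ := hB
    refine hrmin B hBpos ⟨P, Q, ?_⟩
    have hinj2 : Function.Injective (Polynomial.map (Int.castRingHom ℚ) : ℤ[X] → ℚ[X]) :=
      Polynomial.map_injective _ Int.cast_injective
    apply hinj2
    rw [Polynomial.map_add, Polynomial.map_mul, Polynomial.map_mul, hP, hQ, Polynomial.map_C,
      show ((Int.castRingHom ℚ) B) = ((B : ℚ)) from rfl]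
    calc C ((B : ℚ)) * pp * map (Int.castRingHom ℚ) f +
          C ((B : ℚ)) * qq * map (Int.castRingHom ℚ) g
        = C ((B : ℚ)) * (pp * map (Int.castRingHom ℚ) f + qq * map (Int.castRingHom ℚ) g) := by
          ring
      _ = C ((B : ℚ)) := by rw [hpq, mul_one]
  constructor
  · -- hard direction
    intro hBeq
    have hrAbs : r.natAbs ≠ 0 := Int.natAbs_ne_zero.2 (by omega)
    have hRAbs : R.natAbs ≠ 0 := Int.natAbs_ne_zero.2 hR0
    have hdvdN : R.natAbs ∣ r.natAbs := by
      rw [← Nat.factorization_le_iff_dvd hRAbs hrAbs]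
      intro π
      set j := R.natAbs.factorization π with hj
      by_cases hj0 : j = 0
      · simp [← hj, hj0]
      · have hπ : π.Prime := Nat.prime_of_mem_primeFactors
          (by rw [← Nat.support_factorization]; exact Finsupp.mem_support_iff.2 (by rw [← hj]; exact hj0))
        haveI : Fact π.Prime := ⟨hπ⟩
        have hjd : (π : ℤ) ^ j ∣ R := by
          have h1 : (π : ℕ) ^ j ∣ R.natAbs := by rw [hj]; exact Nat.ordProj_dvd _ _
          have h2 : ((π ^ j : ℕ) : ℤ) ∣ ((R.natAbs : ℕ) : ℤ) := Int.natCast_dvd_natCast.2 h1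
          rw [Int.natCast_natAbs] at h2
          push_cast at h2
          exact h2.trans (abs_dvd _ _ |>.2 dvd_rfl)
        have hπR : (π : ℤ) ∣ R := (dvd_pow_self (π : ℤ) hj0).trans hjd
        have hnotall : ¬ ((∀ t, (π : ℤ) ∣ P₀.coeff t) ∧ (∀ t, (π : ℤ) ∣ Q₀.coeff t)) := by
          rintro ⟨hA, hB'⟩
          obtain ⟨P₁, hP₁⟩ := (Polynomial.C_dvd_iff_dvd_coeff ((π : ℤ)) P₀).2 hA
          obtain ⟨Q₁, hQ₁⟩ := (Polynomial.C_dvd_iff_dvd_coeff ((π : ℤ)) Q₀).2 hB'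
          obtain ⟨R₁, hR₁⟩ := hπR
          have hπne : (π : ℤ) ≠ 0 := by exact_mod_cast hπ.ne_zero
          have hCne : (C (π : ℤ) : ℤ[X]) ≠ 0 := by
            simpa using hπne
          have hR₁ne : R₁ ≠ 0 := by
            intro h
            rw [h, mul_zero] at hR₁
            exact hR0 hR₁
          have heq1 : P₁ * f + Q₁ * g = C R₁ := by
            apply mul_left_cancel₀ hCne
            calc C ((π : ℤ)) * (P₁ * f + Q₁ * g) = (C (π : ℤ) * P₁) * f + (C (π : ℤ) * Q₁) * g := by
                  ring
              _ = P₀ * f + Q₀ * g := by rw [← hP₁, ← hQ₁]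
              _ = C R := hPQ₀
              _ = C ((π : ℤ)) * C R₁ := by rw [← C_mul, ← hR₁]
          have hdP₁ : P₁.degree < (g.natDegree : WithBot ℕ) := by
            refine lt_of_le_of_lt ?_ hdP
            rw [hP₁, mul_comm]
            exact degree_le_mul_left P₁ hCne
          have hdQ₁ : Q₁.degree < (f.natDegree : WithBot ℕ) := by
            refine lt_of_le_of_lt ?_ hdQ
            rw [hQ₁, mul_comm]
            exact degree_le_mul_left Q₁ hCne
          have hden1 : IsBezoutDenom f g |R₁| := mkDenom f g hf hg P₁ Q₁ R₁ hR₁ne hdP₁ hdQ₁ heq1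
          have hle1 : B ≤ |R₁| := hBmin _ hden1
          have h2le : (2 : ℤ) ≤ (π : ℤ) := by exact_mod_cast hπ.two_le
          have habsR : |R| = (π : ℤ) * |R₁| := by
            rw [hR₁, abs_mul, abs_of_nonneg (by positivity : (0 : ℤ) ≤ (π : ℤ))]
          have hR₁pos : (0 : ℤ) < |R₁| := abs_pos.2 hR₁ne
          have : 2 * |R₁| ≤ (π : ℤ) * |R₁| := mul_le_mul_of_nonneg_right h2le (abs_nonneg _)
          linarith [hBeq ▸ hle1, habsR]
        have hsOr : (∃ i, ¬ (π : ℤ) ∣ P₀.coeff i) ∨ (∃ i, ¬ (π : ℤ) ∣ Q₀.coeff i) := by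
          by_contra hcon
          push_neg at hcon
          exact hnotall ⟨hcon.1, hcon.2⟩
        have hFG : ¬ ((π : ℤ) ∣ f.leadingCoeff ∧ (π : ℤ) ∣ g.leadingCoeff) := by
          rintro ⟨h1, h2⟩
          exact hnotall (hcorner (π : ℤ) h1 h2)
        obtain ⟨u, v, huv⟩ := hrmem
        have hrd : (π : ℤ) ^ j ∣ r := by
          rcases not_and_or.1 hFG with hF | hGG
          · exact localC π g f v u Q₀ P₀ R r hg hf hcop.symm hdQ
              (by linear_combination hPQ₀) (by linear_combination huv) hF hsOr.symm hR0 j hjd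
          · exact localC π f g u v P₀ Q₀ R r hf hg hcop hdP hPQ₀ huv hGG hsOr hR0 j hjd
        have hfin : (π : ℕ) ^ j ∣ r.natAbs := by
          have h2 : ((π ^ j : ℕ) : ℤ) ∣ r := by push_cast; exact hrd
          exact Int.natCast_dvd.1 h2
        exact (Nat.Prime.pow_dvd_iff_le_factorization hπ hrAbs).1 hfin
    have hdvdZ : |R| ∣ r := by
      have := Int.natAbs_dvd_natAbs.1 hdvdN
      exact (abs_dvd _ _).2 this
    have : |R| ≤ r := Int.le_of_dvd hrpos hdvdZ
    omega
  · intro hreq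
    exact le_antisymm hBleD (hreq ▸ hrleB)

end Main
end

section
/- Let f and g be coprime integer polynomials of positive degree, deg(f) = m, deg(g) = n, and d = gcd(L(f), L(g)). Then |Res(f,g)| divides d^{m+n-1} · B(f,g)^{max(m,n)}. -/
open Polynomial

open Matrix

noncomputable def mulModMat (d : ℕ) (q h : Polynomial ℚ) : Matrix (Fin d) (Fin d) ℚ :=
  Matrix.of fun k i => ((h * X ^ (i : ℕ)) %ₘ q).coeff k

lemma mulModMat_congr (d : ℕ) (q h₁ h₂ : Polynomial ℚ) (hq : q.Monic) (hdvd : q ∣ h₁ - h₂) :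
    mulModMat d q h₁ = mulModMat d q h₂ := by
  ext k i
  show ((h₁ * X ^ (i : ℕ)) %ₘ q).coeff k = ((h₂ * X ^ (i : ℕ)) %ₘ q).coeff k
  obtain ⟨s, hs⟩ := hdvd
  have h1 : h₁ * X ^ (i : ℕ) = h₂ * X ^ (i : ℕ) + q * (s * X ^ (i : ℕ)) := by
    have : h₁ = h₂ + q * s := by linear_combination hs
    rw [this]; ring
  rw [h1, add_modByMonic, (modByMonic_eq_zero_iff_dvd hq).mpr (dvd_mul_right _ _), add_zero]

lemma mulModMat_mul (d : ℕ) (hd : 0 < d) (q : Polynomial ℚ) (hq : q.Monic)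
    (hqd : q.natDegree = d) (h₁ h₂ : Polynomial ℚ) :
    mulModMat d q (h₁ * h₂) = mulModMat d q h₁ * mulModMat d q h₂ := by
  ext k i
  show ((h₁ * h₂ * X ^ (i : ℕ)) %ₘ q).coeff k = _
  rw [Matrix.mul_apply]
  obtain ⟨w, hw⟩ : ∃ w, w = (h₂ * X ^ (i : ℕ)) %ₘ q := ⟨_, rfl⟩
  have hdegq : q.degree = (d : ℕ) := by
    rw [← hqd]; exact (degree_eq_natDegree hq.ne_zero)
  have hdegw : w.natDegree < d := by
    have hlt : w.degree < (d : ℕ) := by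
      rw [← hdegq, hw]; exact degree_modByMonic_lt _ hq
    rcases eq_or_ne w 0 with h0 | h0
    · simpa [h0] using hd
    · exact (natDegree_lt_iff_degree_lt h0).mpr hlt
  have key : (h₁ * h₂ * X ^ (i : ℕ)) %ₘ q = (h₁ * w) %ₘ q := by
    have h1 : h₁ * h₂ * X ^ (i : ℕ) = h₁ * w + q * (h₁ * ((h₂ * X ^ (i : ℕ)) /ₘ q)) := by
      rw [hw]
      linear_combination (-h₁) * (modByMonic_add_div (h₂ * X ^ (i : ℕ)) q)
    rw [h1, add_modByMonic, (modByMonic_eq_zero_iff_dvd hq).mpr (dvd_mul_right _ _), add_zero]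
  rw [key]
  have hexp : h₁ * w = ∑ j ∈ Finset.range d, w.coeff j • (h₁ * X ^ j) := by
    conv_lhs => rw [w.as_sum_range' d hdegw]
    rw [Finset.mul_sum]
    refine Finset.sum_congr rfl fun j _ => ?_
    rw [← C_mul_X_pow_eq_monomial, smul_eq_C_mul]; ring
  rw [hexp]
  have hmod : (∑ j ∈ Finset.range d, w.coeff j • (h₁ * X ^ j)) %ₘ q
      = ∑ j ∈ Finset.range d, w.coeff j • ((h₁ * X ^ j) %ₘ q) := by
    rw [← Polynomial.modByMonicHom_apply, map_sum]
    refine Finset.sum_congr rfl fun j _ => ?_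
    rw [LinearMap.map_smul, Polynomial.modByMonicHom_apply]
  rw [hmod, finset_sum_coeff]
  rw [← Fin.sum_univ_eq_sum_range (fun j => (w.coeff j • ((h₁ * X ^ j) %ₘ q)).coeff k) d]
  refine Finset.sum_congr rfl fun j _ => ?_
  rw [coeff_smul]
  show w.coeff (j : ℕ) * ((h₁ * X ^ (j : ℕ)) %ₘ q).coeff k
      = ((h₁ * X ^ (j : ℕ)) %ₘ q).coeff k * ((h₂ * X ^ (i : ℕ)) %ₘ q).coeff (j : ℕ)
  rw [← hw]; ring

lemma mulModMat_C (d : ℕ) (q : Polynomial ℚ) (hq : q.Monic) (hqd : q.natDegree = d) (β : ℚ) :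
    mulModMat d q (Polynomial.C β) = β • (1 : Matrix (Fin d) (Fin d) ℚ) := by
  ext k i
  show ((Polynomial.C β * X ^ (i : ℕ)) %ₘ q).coeff k = _
  have hdegq : q.degree = (d : ℕ) := by
    rw [← hqd]; exact (degree_eq_natDegree hq.ne_zero)
  have hself : (Polynomial.C β * X ^ (i : ℕ)) %ₘ q = Polynomial.C β * X ^ (i : ℕ) := by
    rw [modByMonic_eq_self_iff hq, hdegq]
    calc (Polynomial.C β * X ^ (i : ℕ)).degree ≤ ((i : ℕ) : WithBot ℕ) :=
          degree_C_mul_X_pow_le _ _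
    _ < ((d : ℕ) : WithBot ℕ) := by exact_mod_cast i.isLt
  rw [hself, coeff_C_mul, coeff_X_pow]
  by_cases h : k = i
  · subst h; simp [Matrix.smul_apply, Matrix.one_apply]
  · have h2 : ¬((k : ℕ) = (i : ℕ)) := fun hh => h (Fin.ext hh)
    simp [Matrix.smul_apply, Matrix.one_apply, h, h2]

lemma abs_det_submatrix {I N : Type*} [Fintype I] [DecidableEq I] [Fintype N] [DecidableEq N]
    (M : Matrix N N ℚ) (ρ κ : I ≃ N) : |(M.submatrix ρ κ).det| = |M.det| := by
  have h : M.submatrix ρ κ = (M.submatrix κ κ).submatrix (ρ.trans κ.symm) (Equiv.refl I) := by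
    ext i j; simp
  have h2 : ((M.submatrix κ κ).submatrix (ρ.trans κ.symm) (Equiv.refl I)).det
      = (Equiv.Perm.sign (ρ.trans κ.symm) : ℤ) * (M.submatrix κ κ).det := by
    have := Matrix.det_permute (ρ.trans κ.symm) (M.submatrix κ κ)
    convert this using 2
    rfl
  rw [h, h2, Matrix.det_submatrix_equiv_self, abs_mul]
  rcases Int.units_eq_one_or (Equiv.Perm.sign (ρ.trans κ.symm)) with hs | hs <;>
    rw [hs] <;> norm_num

lemma core_det (c a : ℕ) (Cq : Polynomial ℚ) (hc : Cq.natDegree = c) (h0 : Cq ≠ 0)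
    (w : Fin c → Polynomial ℚ) (hw : ∀ i, (w i).natDegree < c + a) :
    (Matrix.fromBlocks
      (Matrix.of fun (i : Fin c) (k : Fin c) => (w i).coeff k)
      (Matrix.of fun (i : Fin c) (k : Fin a) => (w i).coeff (c + k))
      (Matrix.of fun (k : Fin a) (j : Fin c) => (Cq * X ^ (k : ℕ)).coeff j)
      (Matrix.of fun (k : Fin a) (j : Fin a) => (Cq * X ^ (k : ℕ)).coeff (c + j))).det
    = Cq.leadingCoeff ^ a *
      (Matrix.of fun (i k : Fin c) =>
        ((w i) %ₘ (Cq * Polynomial.C Cq.leadingCoeff⁻¹)).coeff k).det := by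
  have hlc : Cq.leadingCoeff ≠ 0 := leadingCoeff_ne_zero.mpr h0
  set u : ℚ := Cq.leadingCoeff⁻¹ with hu
  have hu0 : u ≠ 0 := inv_ne_zero hlc
  set Ct : Polynomial ℚ := Cq * Polynomial.C u with hCtdef
  have hCt : Ct.Monic := monic_mul_leadingCoeff_inv h0
  have hCtdeg : Ct.natDegree = c := by
    rw [hCtdef, natDegree_mul_C hu0, hc]
  have hCtdegree : Ct.degree = (c : ℕ) := by
    rw [← hCtdeg]; exact degree_eq_natDegree hCt.ne_zero
  set qq : Fin c → Polynomial ℚ := fun i => Polynomial.C u * ((w i) /ₘ Ct) with hqqdef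
  -- coefficients of qq vanish from a on
  have hcoeff : ∀ (i : Fin c) (j : ℕ), a ≤ j → (qq i).coeff j = 0 := by
    intro i j hj
    by_cases hlt : (w i).degree < Ct.degree
    · rw [hqqdef]; simp [(divByMonic_eq_zero_iff hCt).mpr hlt]
    · push_neg at hlt
      have hwne : w i ≠ 0 := by
        intro hzero
        rw [hzero, degree_zero, hCtdegree] at hlt
        exact absurd hlt (by simp)
      have hdegw : c ≤ (w i).natDegree := by
        have h' := natDegree_le_natDegree hlt
        rwa [hCtdeg] at h'
      apply coeff_eq_zero_of_natDegree_lt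
      calc (qq i).natDegree ≤ ((w i) /ₘ Ct).natDegree := by
            rw [hqqdef]
            simpa [mul_comm] using natDegree_mul_C_le ((w i) /ₘ Ct) u
      _ = (w i).natDegree - Ct.natDegree := natDegree_divByMonic _ hCt
      _ < a := by
            rw [hCtdeg]
            have := hw i
            omega
      _ ≤ j := hj
  -- decomposition of each w i
  have hsplit : ∀ i, w i = (w i) %ₘ Ct + qq i * Cq := by
    intro i
    have h1 := modByMonic_add_div (w i) Ct
    rw [hqqdef, hCtdef]
    linear_combination -h1
  -- expansion of (qq i * Cq).coeff
  have hqq_eq : ∀ i, qq i = ∑ j ∈ Finset.range a, Polynomial.C ((qq i).coeff j) * X ^ j := by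
    intro i
    ext t
    rw [finset_sum_coeff]
    simp only [coeff_C_mul, coeff_X_pow, mul_ite, mul_one, mul_zero]
    by_cases ht : t < a
    · rw [Finset.sum_eq_single t]
      · simp
      · intro b _ hb; simp [Ne.symm hb]
      · intro hmem; exact absurd (Finset.mem_range.mpr ht) hmem
    · push_neg at ht
      rw [Finset.sum_eq_zero, hcoeff i t ht]
      intro b hb
      have : b ≠ t := by have := Finset.mem_range.mp hb; omega
      simp [Ne.symm this]
  have hexp : ∀ (i : Fin c) (t : ℕ),
      (qq i * Cq).coeff t = ∑ j : Fin a, (qq i).coeff j * (Cq * X ^ (j : ℕ)).coeff t := by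
    intro i t
    conv_lhs => rw [hqq_eq i]
    rw [Finset.sum_mul, finset_sum_coeff]
    refine Eq.trans ?_ (Fin.sum_univ_eq_sum_range
      (fun j => (qq i).coeff j * (Cq * X ^ j).coeff t) a).symm
    refine Finset.sum_congr rfl fun j _ => ?_
    rw [show Polynomial.C ((qq i).coeff (j : ℕ)) * X ^ (j : ℕ) * Cq
        = Polynomial.C ((qq i).coeff (j : ℕ)) * (Cq * X ^ (j : ℕ)) by ring, coeff_C_mul]
  -- matrix factorization
  set Rm : Matrix (Fin c) (Fin c) ℚ := Matrix.of fun i k => ((w i) %ₘ Ct).coeff k with hRm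
  set Qm : Matrix (Fin c) (Fin a) ℚ := Matrix.of fun i j => (qq i).coeff j with hQm
  set Y : Matrix (Fin a) (Fin c) ℚ := Matrix.of fun k j => (Cq * X ^ (k : ℕ)).coeff j with hY
  set D : Matrix (Fin a) (Fin a) ℚ := Matrix.of fun k j => (Cq * X ^ (k : ℕ)).coeff (c + j) with hD
  have hrem_high : ∀ (i : Fin c) (k : Fin a), ((w i) %ₘ Ct).coeff (c + (k : ℕ)) = 0 := by
    intro i k
    apply coeff_eq_zero_of_degree_lt
    calc ((w i) %ₘ Ct).degree < Ct.degree := degree_modByMonic_lt _ hCt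
    _ = (c : ℕ) := hCtdegree
    _ ≤ ((c + (k : ℕ) : ℕ) : WithBot ℕ) := by exact_mod_cast Nat.le_add_right c k
  have hfact : Matrix.fromBlocks
      (Matrix.of fun (i : Fin c) (k : Fin c) => (w i).coeff k)
      (Matrix.of fun (i : Fin c) (k : Fin a) => (w i).coeff (c + k))
      (Matrix.of fun (k : Fin a) (j : Fin c) => (Cq * X ^ (k : ℕ)).coeff j)
      (Matrix.of fun (k : Fin a) (j : Fin a) => (Cq * X ^ (k : ℕ)).coeff (c + j))
      = (Matrix.fromBlocks Rm Qm 0 1) * (Matrix.fromBlocks 1 0 Y D) := by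
    rw [Matrix.fromBlocks_multiply]
    simp only [Matrix.mul_one, Matrix.one_mul, Matrix.mul_zero, Matrix.zero_mul,
      zero_add, add_zero]
    have hTL : (Matrix.of fun (i : Fin c) (k : Fin c) => (w i).coeff k) = Rm + Qm * Y := by
      ext i k
      show (w i).coeff k = Rm i k + (Qm * Y) i k
      rw [Matrix.mul_apply]
      conv_lhs => rw [hsplit i]
      rw [coeff_add, hexp i k]
      rfl
    have hTR : (Matrix.of fun (i : Fin c) (k : Fin a) => (w i).coeff (c + k)) = Qm * D := by
      ext i k
      show (w i).coeff (c + (k : ℕ)) = (Qm * D) i k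
      rw [Matrix.mul_apply]
      conv_lhs => rw [hsplit i]
      rw [coeff_add, hexp i (c + (k : ℕ)), hrem_high i k, zero_add]
      rfl
    rw [hTL, hTR]
  rw [hfact, Matrix.det_mul, Matrix.det_fromBlocks_zero₂₁, Matrix.det_fromBlocks_zero₁₂,
    Matrix.det_one, Matrix.det_one, mul_one, one_mul]
  have hDdet : D.det = Cq.leadingCoeff ^ a := by
    have htri : D.BlockTriangular OrderDual.toDual := by
      intro k j hkj
      have hkj' : (k : ℕ) < (j : ℕ) := hkj
      have hDkj : D k j = (Cq * X ^ (k : ℕ)).coeff (c + (j : ℕ)) := rfl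
      rw [hDkj, coeff_mul_X_pow' Cq (k : ℕ) (c + (j : ℕ)),
        if_pos (by omega : (k : ℕ) ≤ c + (j : ℕ))]
      exact coeff_eq_zero_of_natDegree_lt (by omega)
    rw [Matrix.det_of_lowerTriangular D htri]
    have hdiag : ∀ j : Fin a, D j j = Cq.leadingCoeff := by
      intro j
      show (Cq * X ^ (j : ℕ)).coeff (c + (j : ℕ)) = _
      rw [coeff_mul_X_pow' Cq (j : ℕ) (c + (j : ℕ)),
        if_pos (by omega : (j : ℕ) ≤ c + (j : ℕ)),
        (by omega : c + (j : ℕ) - (j : ℕ) = c), ← hc]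
      rfl
    rw [Finset.prod_congr rfl (fun j _ => hdiag j), Finset.prod_const, Finset.card_univ,
      Fintype.card_fin]
  rw [hDdet]
  ring

noncomputable def rowPoly (A C : Polynomial ℤ) (i : Fin (C.natDegree + A.natDegree)) :
    Polynomial ℚ :=
  if (i : ℕ) < C.natDegree
  then (A.map (Int.castRingHom ℚ)) * X ^ (C.natDegree - 1 - (i : ℕ))
  else (C.map (Int.castRingHom ℚ)) * X ^ (A.natDegree - 1 - ((i : ℕ) - C.natDegree))

lemma natDegree_map_q (A : Polynomial ℤ) :
    (A.map (Int.castRingHom ℚ)).natDegree = A.natDegree :=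
  natDegree_map_eq_of_injective (fun x y h => by simpa using h) A

lemma sylvester_entry (A C : Polynomial ℤ) (i j : Fin (C.natDegree + A.natDegree)) :
    ((sylvesterMatrix A C i j : ℤ) : ℚ) = (rowPoly A C i).coeff (Fin.rev j) := by
  have hNa : (A.map (Int.castRingHom ℚ)).natDegree = A.natDegree := natDegree_map_q A
  have hNc : (C.map (Int.castRingHom ℚ)).natDegree = C.natDegree := natDegree_map_q C
  have hi := i.isLt
  have hjlt := j.isLt
  have hrev : ((Fin.rev j : Fin _) : ℕ) = C.natDegree + A.natDegree - ((j : ℕ) + 1) :=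
    Fin.val_rev j
  unfold sylvesterMatrix rowPoly
  by_cases hic : (i : ℕ) < C.natDegree
  · rw [if_pos hic, Matrix.of_apply, if_pos hic, hrev,
      coeff_mul_X_pow' (A.map (Int.castRingHom ℚ)) _ _]
    by_cases hwin : (i : ℕ) ≤ (j : ℕ) ∧ (j : ℕ) ≤ (i : ℕ) + A.natDegree
    · rw [if_pos hwin, if_pos (by omega : C.natDegree - 1 - (i : ℕ)
        ≤ C.natDegree + A.natDegree - ((j : ℕ) + 1))]
      rw [coeff_map]
      norm_num
      congr 1
      omega
    · rw [if_neg hwin]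
      by_cases hcond : C.natDegree - 1 - (i : ℕ) ≤ C.natDegree + A.natDegree - ((j : ℕ) + 1)
      · rw [if_pos hcond, Int.cast_zero]
        symm
        apply coeff_eq_zero_of_natDegree_lt
        rw [hNa]
        omega
      · rw [if_neg hcond]; norm_num
  · rw [if_neg hic, Matrix.of_apply, if_neg hic, hrev,
      coeff_mul_X_pow' (C.map (Int.castRingHom ℚ)) _ _]
    by_cases hwin : (i : ℕ) - C.natDegree ≤ (j : ℕ)
        ∧ (j : ℕ) ≤ (i : ℕ) - C.natDegree + C.natDegree
    · rw [if_pos hwin, if_pos (by omega : A.natDegree - 1 - ((i : ℕ) - C.natDegree)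
        ≤ C.natDegree + A.natDegree - ((j : ℕ) + 1))]
      rw [coeff_map]
      norm_num
      congr 1
      omega
    · rw [if_neg hwin]
      by_cases hcond : A.natDegree - 1 - ((i : ℕ) - C.natDegree)
          ≤ C.natDegree + A.natDegree - ((j : ℕ) + 1)
      · rw [if_pos hcond, Int.cast_zero]
        symm
        apply coeff_eq_zero_of_natDegree_lt
        rw [hNc]
        omega
      · rw [if_neg hcond]; norm_num

lemma L1 (A C : Polynomial ℤ) (hC : 0 < C.natDegree) :
    |(((sylvesterMatrix A C).det : ℤ) : ℚ)|
      = |((C.leadingCoeff : ℤ) : ℚ)| ^ A.natDegree *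
        |(mulModMat C.natDegree
            ((C.map (Int.castRingHom ℚ)) * Polynomial.C (C.map (Int.castRingHom ℚ)).leadingCoeff⁻¹)
            (A.map (Int.castRingHom ℚ))).det| := by
  set c := C.natDegree with hc
  set a := A.natDegree with ha
  set Aq := A.map (Int.castRingHom ℚ) with hAq
  set Cq := C.map (Int.castRingHom ℚ) with hCq
  have hCqdeg : Cq.natDegree = c := natDegree_map_q C
  have hCq0 : Cq ≠ 0 := by
    intro h
    rw [h] at hCqdeg
    simp only [natDegree_zero] at hCqdeg
    omega
  set Ct := Cq * Polynomial.C Cq.leadingCoeff⁻¹ with hCt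
  set w : Fin c → Polynomial ℚ := fun i => Aq * X ^ (c - 1 - (i : ℕ)) with hwdef
  set ρ : (Fin c ⊕ Fin a) ≃ Fin (c + a) :=
    (Equiv.sumCongr (Equiv.refl (Fin c)) Fin.revPerm).trans finSumFinEquiv with hρ
  set κ : (Fin c ⊕ Fin a) ≃ Fin (c + a) :=
    finSumFinEquiv.trans Fin.revPerm with hκ
  have hκval : ∀ s : Fin c ⊕ Fin a, ((κ s).rev : ℕ) = ((finSumFinEquiv s : Fin (c + a)) : ℕ) := by
    intro s
    simp [hκ, Fin.rev_rev]
  have hsub : (((sylvesterMatrix A C).map (⇑(Int.castRingHom ℚ))).submatrix ρ κ) =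
      Matrix.fromBlocks
        (Matrix.of fun (i : Fin c) (k : Fin c) => (w i).coeff k)
        (Matrix.of fun (i : Fin c) (k : Fin a) => (w i).coeff (c + k))
        (Matrix.of fun (k : Fin a) (j : Fin c) => (Cq * X ^ (k : ℕ)).coeff j)
        (Matrix.of fun (k : Fin a) (j : Fin a) => (Cq * X ^ (k : ℕ)).coeff (c + j)) := by
    ext r s
    rcases r with i | k <;> rcases s with k' | j <;>
      rw [Matrix.submatrix_apply, Matrix.map_apply] <;>
      rw [show ((Int.castRingHom ℚ) (sylvesterMatrix A C (ρ _) (κ _)) : ℚ)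
          = ((sylvesterMatrix A C (ρ _) (κ _) : ℤ) : ℚ) from rfl, sylvester_entry]
    · have hv : ((ρ (Sum.inl i)) : ℕ) = (i : ℕ) := by simp [hρ]
      have hv2 : ((κ (Sum.inl k')).rev : ℕ) = (k' : ℕ) := by
        rw [hκval]; simp
      rw [show (rowPoly A C (ρ (Sum.inl i))) = Aq * X ^ (c - 1 - ((ρ (Sum.inl i)) : ℕ)) from
        by rw [rowPoly, if_pos (by rw [hv]; exact i.isLt)]]
      rw [hv, hv2]
      rfl
    · have hv : ((ρ (Sum.inl i)) : ℕ) = (i : ℕ) := by simp [hρ]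
      have hv2 : ((κ (Sum.inr j)).rev : ℕ) = c + (j : ℕ) := by
        rw [hκval]; simp
      rw [show (rowPoly A C (ρ (Sum.inl i))) = Aq * X ^ (c - 1 - ((ρ (Sum.inl i)) : ℕ)) from
        by rw [rowPoly, if_pos (by rw [hv]; exact i.isLt)]]
      rw [hv, hv2]
      rfl
    · have hv : ((ρ (Sum.inr k)) : ℕ) = c + (a - 1 - (k : ℕ)) := by
        simp [hρ]
        omega
      have hv2 : ((κ (Sum.inl k')).rev : ℕ) = (k' : ℕ) := by
        rw [hκval]; simp
      have hrow : (rowPoly A C (ρ (Sum.inr k))) = Cq * X ^ (k : ℕ) := by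
        rw [rowPoly, if_neg (by rw [hv]; omega)]
        rw [hv]
        congr 1
        have := k.isLt
        congr 1
        omega
      rw [hrow, hv2]
      rfl
    · have hv : ((ρ (Sum.inr k)) : ℕ) = c + (a - 1 - (k : ℕ)) := by
        simp [hρ]
        omega
      have hv2 : ((κ (Sum.inr j)).rev : ℕ) = c + (j : ℕ) := by
        rw [hκval]; simp
      have hrow : (rowPoly A C (ρ (Sum.inr k))) = Cq * X ^ (k : ℕ) := by
        rw [rowPoly, if_neg (by rw [hv]; omega)]
        rw [hv]
        congr 1
        have := k.isLt
        congr 1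
        omega
      rw [hrow, hv2]
      rfl
  have hw : ∀ i : Fin c, (w i).natDegree < c + a := by
    intro i
    rcases eq_or_ne Aq 0 with h0 | h0
    · rw [hwdef]
      simp only [h0, zero_mul, natDegree_zero]
      omega
    · rw [hwdef]
      simp only []
      rw [natDegree_mul h0 (pow_ne_zero _ X_ne_zero), natDegree_X_pow]
      have hAqdeg : Aq.natDegree = a := natDegree_map_q A
      have := i.isLt
      omega
  have hdet0 : ((sylvesterMatrix A C).map (⇑(Int.castRingHom ℚ))).det
      = (((sylvesterMatrix A C).det : ℤ) : ℚ) := by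
    rw [show ((sylvesterMatrix A C).map (⇑(Int.castRingHom ℚ)))
        = (Int.castRingHom ℚ).mapMatrix (sylvesterMatrix A C) from rfl]
    rw [← RingHom.map_det]
    rfl
  have habs : |(((sylvesterMatrix A C).det : ℤ) : ℚ)|
      = |((((sylvesterMatrix A C).map (⇑(Int.castRingHom ℚ))).submatrix ρ κ)).det| := by
    rw [abs_det_submatrix, hdet0]
  rw [habs, hsub, core_det c a Cq hCqdeg hCq0 w hw]
  have hlc : Cq.leadingCoeff = ((C.leadingCoeff : ℤ) : ℚ) :=
    leadingCoeff_map_of_injective (fun x y h => by simpa using h) C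
  rw [abs_mul, abs_pow]
  have hmm : (Matrix.of fun (i k : Fin c) => ((w i) %ₘ Ct).coeff k)
      = ((mulModMat c Ct Aq).transpose).submatrix Fin.revPerm (Equiv.refl (Fin c)) := by
    ext i k
    show ((w i) %ₘ Ct).coeff k = ((Aq * X ^ ((Fin.rev i : Fin c) : ℕ)) %ₘ Ct).coeff k
    rw [Fin.val_rev]
    have : c - 1 - (i : ℕ) = c - ((i : ℕ) + 1) := by omega
    rw [hwdef]
    simp only []
    rw [this]
  congr 1
  · rw [hlc]
  · rw [hmm, abs_det_submatrix, Matrix.det_transpose]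

lemma L2 (A C : Polynomial ℤ) (hA : 0 < A.natDegree) :
    |(((sylvesterMatrix A C).det : ℤ) : ℚ)|
      = |((A.leadingCoeff : ℤ) : ℚ)| ^ C.natDegree *
        |(mulModMat A.natDegree
            ((A.map (Int.castRingHom ℚ)) * Polynomial.C (A.map (Int.castRingHom ℚ)).leadingCoeff⁻¹)
            (C.map (Int.castRingHom ℚ))).det| := by
  set c := C.natDegree with hc
  set a := A.natDegree with ha
  set Aq := A.map (Int.castRingHom ℚ) with hAq
  set Cq := C.map (Int.castRingHom ℚ) with hCq
  have hAqdeg : Aq.natDegree = a := natDegree_map_q A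
  have hAq0 : Aq ≠ 0 := by
    intro h
    rw [h] at hAqdeg
    simp only [natDegree_zero] at hAqdeg
    omega
  set At := Aq * Polynomial.C Aq.leadingCoeff⁻¹ with hAt
  set w : Fin a → Polynomial ℚ := fun k => Cq * X ^ (a - 1 - (k : ℕ)) with hwdef
  set ρ : (Fin a ⊕ Fin c) ≃ Fin (c + a) :=
    (Equiv.sumCongr (Equiv.refl (Fin a)) Fin.revPerm).trans
      ((Equiv.sumComm (Fin a) (Fin c)).trans finSumFinEquiv) with hρ
  set κ : (Fin a ⊕ Fin c) ≃ Fin (c + a) :=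
    (finSumFinEquiv.trans (finCongr (Nat.add_comm a c))).trans Fin.revPerm with hκ
  have hκval : ∀ s : Fin a ⊕ Fin c,
      ((κ s).rev : ℕ) = ((finSumFinEquiv s : Fin (a + c)) : ℕ) := by
    intro s
    simp [hκ, Fin.rev_rev]
  have hsub : (((sylvesterMatrix A C).map (⇑(Int.castRingHom ℚ))).submatrix ρ κ) =
      Matrix.fromBlocks
        (Matrix.of fun (k : Fin a) (k' : Fin a) => (w k).coeff k')
        (Matrix.of fun (k : Fin a) (j : Fin c) => (w k).coeff (a + j))
        (Matrix.of fun (i : Fin c) (k' : Fin a) => (Aq * X ^ (i : ℕ)).coeff k')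
        (Matrix.of fun (i : Fin c) (j : Fin c) => (Aq * X ^ (i : ℕ)).coeff (a + j)) := by
    ext r s
    rcases r with k | i <;> rcases s with k' | j <;>
      rw [Matrix.submatrix_apply, Matrix.map_apply] <;>
      rw [show ((Int.castRingHom ℚ) (sylvesterMatrix A C (ρ _) (κ _)) : ℚ)
          = ((sylvesterMatrix A C (ρ _) (κ _) : ℤ) : ℚ) from rfl, sylvester_entry]
    · have hv : ((ρ (Sum.inl k)) : ℕ) = c + (k : ℕ) := by simp [hρ]
      have hv2 : ((κ (Sum.inl k')).rev : ℕ) = (k' : ℕ) := by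
        rw [hκval]; simp
      have hrow : (rowPoly A C (ρ (Sum.inl k))) = Cq * X ^ (a - 1 - (k : ℕ)) := by
        rw [rowPoly, if_neg (by rw [hv]; omega)]
        rw [hv]
        congr 1
        congr 1
        omega
      rw [hrow, hv2]
      rfl
    · have hv : ((ρ (Sum.inl k)) : ℕ) = c + (k : ℕ) := by simp [hρ]
      have hv2 : ((κ (Sum.inr j)).rev : ℕ) = a + (j : ℕ) := by
        rw [hκval]; simp
      have hrow : (rowPoly A C (ρ (Sum.inl k))) = Cq * X ^ (a - 1 - (k : ℕ)) := by
        rw [rowPoly, if_neg (by rw [hv]; omega)]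
        rw [hv]
        congr 1
        congr 1
        omega
      rw [hrow, hv2]
      rfl
    · have hv : ((ρ (Sum.inr i)) : ℕ) = c - 1 - (i : ℕ) := by
        simp [hρ]
        omega
      have hv2 : ((κ (Sum.inl k')).rev : ℕ) = (k' : ℕ) := by
        rw [hκval]; simp
      have hrow : (rowPoly A C (ρ (Sum.inr i))) = Aq * X ^ (i : ℕ) := by
        rw [rowPoly, if_pos (by rw [hv]; have := i.isLt; omega)]
        rw [hv]
        congr 1
        congr 1
        have := i.isLt
        omega
      rw [hrow, hv2]
      rfl
    · have hv : ((ρ (Sum.inr i)) : ℕ) = c - 1 - (i : ℕ) := by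
        simp [hρ]
        omega
      have hv2 : ((κ (Sum.inr j)).rev : ℕ) = a + (j : ℕ) := by
        rw [hκval]; simp
      have hrow : (rowPoly A C (ρ (Sum.inr i))) = Aq * X ^ (i : ℕ) := by
        rw [rowPoly, if_pos (by rw [hv]; have := i.isLt; omega)]
        rw [hv]
        congr 1
        congr 1
        have := i.isLt
        omega
      rw [hrow, hv2]
      rfl
  have hw : ∀ k : Fin a, (w k).natDegree < a + c := by
    intro k
    rcases eq_or_ne Cq 0 with h0 | h0
    · rw [hwdef]
      simp only [h0, zero_mul, natDegree_zero]
      omega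
    · rw [hwdef]
      simp only []
      rw [natDegree_mul h0 (pow_ne_zero _ X_ne_zero), natDegree_X_pow]
      have hCqdeg : Cq.natDegree = c := natDegree_map_q C
      have := k.isLt
      omega
  have hdet0 : ((sylvesterMatrix A C).map (⇑(Int.castRingHom ℚ))).det
      = (((sylvesterMatrix A C).det : ℤ) : ℚ) := by
    rw [show ((sylvesterMatrix A C).map (⇑(Int.castRingHom ℚ)))
        = (Int.castRingHom ℚ).mapMatrix (sylvesterMatrix A C) from rfl]
    rw [← RingHom.map_det]
    rfl
  have habs : |(((sylvesterMatrix A C).det : ℤ) : ℚ)|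
      = |((((sylvesterMatrix A C).map (⇑(Int.castRingHom ℚ))).submatrix ρ κ)).det| := by
    rw [abs_det_submatrix, hdet0]
  rw [habs, hsub, core_det a c Aq hAqdeg hAq0 w hw]
  have hlc : Aq.leadingCoeff = ((A.leadingCoeff : ℤ) : ℚ) :=
    leadingCoeff_map_of_injective (fun x y h => by simpa using h) A
  rw [abs_mul, abs_pow]
  have hmm : (Matrix.of fun (k k' : Fin a) => ((w k) %ₘ At).coeff k')
      = ((mulModMat a At Cq).transpose).submatrix Fin.revPerm (Equiv.refl (Fin a)) := by
    ext k k'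
    show ((w k) %ₘ At).coeff k' = ((Cq * X ^ ((Fin.rev k : Fin a) : ℕ)) %ₘ At).coeff k'
    rw [Fin.val_rev]
    have : a - 1 - (k : ℕ) = a - ((k : ℕ) + 1) := by omega
    rw [hwdef]
    simp only []
    rw [this]
  congr 1
  · rw [hlc]
  · rw [hmm, abs_det_submatrix, Matrix.det_transpose]

lemma arith_combine (a B X Y s m n : ℕ) (ha : a ≠ 0) (hB : B ≠ 0) (hX : X ≠ 0) (hY : Y ≠ 0)
    (h1 : a ∣ B ^ n * X ^ s) (h2 : a ∣ B ^ m * Y ^ s) :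
    a ∣ (Nat.gcd X Y) ^ s * B ^ (max m n) := by
  have hgcd : Nat.gcd X Y ≠ 0 := Nat.gcd_ne_zero_left hX
  rw [← Nat.factorization_le_iff_dvd ha (by positivity)]
  have f1 := (Nat.factorization_le_iff_dvd ha (by positivity)).mpr h1
  have f2 := (Nat.factorization_le_iff_dvd ha (by positivity)).mpr h2
  intro p
  have e1 := f1 p
  have e2 := f2 p
  rw [Nat.factorization_mul (by positivity) (by positivity)] at e1 e2 ⊢
  rw [Nat.factorization_pow, Nat.factorization_pow] at e1 e2 ⊢
  rw [Nat.factorization_gcd hX hY]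
  simp only [Finsupp.coe_add, Finsupp.coe_smul, Pi.add_apply, Pi.smul_apply, smul_eq_mul,
    Finsupp.inf_apply] at e1 e2 ⊢
  rcases le_total (X.factorization p) (Y.factorization p) with hxy | hxy
  · have : min (X.factorization p) (Y.factorization p) = X.factorization p := min_eq_left hxy
    rw [this]
    have hn : n ≤ max m n := le_max_right m n
    nlinarith [Nat.mul_le_mul_right (B.factorization p) hn]
  · have : min (X.factorization p) (Y.factorization p) = Y.factorization p := min_eq_right hxy
    rw [this]
    have hm : m ≤ max m n := le_max_left m n
    nlinarith [Nat.mul_le_mul_right (B.factorization p) hm]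

theorem statement_16 (f g : Polynomial ℤ)
    (hf : 0 < f.natDegree) (hg : 0 < g.natDegree)
    (hcop : IsCoprime (f.map (Int.castRingHom ℚ)) (g.map (Int.castRingHom ℚ)))
    (B : ℤ) (hB : IsBezoutDenom f g B)
    (hBmin : ∀ B' : ℤ, IsBezoutDenom f g B' → B ≤ B') :
    |res f g| ∣
      (Int.gcd f.leadingCoeff g.leadingCoeff : ℤ) ^ (f.natDegree + g.natDegree - 1) * B ^ max f.natDegree g.natDegree := by
  obtain ⟨hBpos, p, q, hpd, hqd, hpq, ⟨P, hP⟩, ⟨Q, hQ⟩⟩ := hB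
  set m := f.natDegree with hm
  set n := g.natDegree with hn
  set Fq := f.map (Int.castRingHom ℚ) with hFqdef
  set Gq := g.map (Int.castRingHom ℚ) with hGqdef
  set Pq := P.map (Int.castRingHom ℚ) with hPqdef
  set Qq := Q.map (Int.castRingHom ℚ) with hQqdef
  have hFdeg : Fq.natDegree = m := natDegree_map_q f
  have hGdeg : Gq.natDegree = n := natDegree_map_q g
  have hF0 : Fq ≠ 0 := by
    intro h; rw [h, natDegree_zero] at hFdeg; omega
  have hG0 : Gq ≠ 0 := by
    intro h; rw [h, natDegree_zero] at hGdeg; omega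
  have hBq0 : (B : ℚ) ≠ 0 := by
    have : (0 : ℚ) < (B : ℚ) := by exact_mod_cast hBpos
    exact this.ne'
  have hflc : f.leadingCoeff ≠ 0 := by
    rw [Polynomial.leadingCoeff_ne_zero]
    intro h; rw [h, natDegree_zero] at hm; omega
  have hglc : g.leadingCoeff ≠ 0 := by
    rw [Polynomial.leadingCoeff_ne_zero]
    intro h; rw [h, natDegree_zero] at hn; omega
  have hGlcq : Gq.leadingCoeff ≠ 0 := leadingCoeff_ne_zero.mpr hG0
  have hFlcq : Fq.leadingCoeff ≠ 0 := leadingCoeff_ne_zero.mpr hF0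
  -- degree bounds for P and Q
  have hPnd : P.natDegree ≤ n - 1 := by
    have h1 : Pq.natDegree = P.natDegree := natDegree_map_q P
    rw [hP] at h1
    rcases eq_or_ne p 0 with h0 | h0
    · rw [h0, mul_zero, natDegree_zero] at h1; omega
    · rw [natDegree_C_mul hBq0] at h1
      have hGdegree : Gq.degree = (n : ℕ) := by rw [degree_eq_natDegree hG0, hGdeg]
      have h2 : p.natDegree < n := by
        rw [natDegree_lt_iff_degree_lt h0]
        rw [hGdegree] at hpd
        exact hpd
      omega
  have hQnd : Q.natDegree ≤ m - 1 := by
    have h1 : Qq.natDegree = Q.natDegree := natDegree_map_q Q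
    rw [hQ] at h1
    rcases eq_or_ne q 0 with h0 | h0
    · rw [h0, mul_zero, natDegree_zero] at h1; omega
    · rw [natDegree_C_mul hBq0] at h1
      have hFdegree : Fq.degree = (m : ℕ) := by rw [degree_eq_natDegree hF0, hFdeg]
      have h2 : q.natDegree < m := by
        rw [natDegree_lt_iff_degree_lt h0]
        rw [hFdegree] at hqd
        exact hqd
      omega
  -- scaled Bezout identity
  have hbez : Pq * Fq + Qq * Gq = Polynomial.C (B : ℚ) := by
    rw [hP, hQ]
    calc Polynomial.C (B : ℚ) * p * Fq + Polynomial.C (B : ℚ) * q * Gq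
        = Polynomial.C (B : ℚ) * (p * Fq + q * Gq) := by ring
    _ = Polynomial.C (B : ℚ) := by rw [hpq, mul_one]
  ----------------------------------------------------------------
  -- g side
  set Gt := Gq * Polynomial.C Gq.leadingCoeff⁻¹ with hGtdef
  have hGtM : Gt.Monic := monic_mul_leadingCoeff_inv hG0
  have hGtdeg : Gt.natDegree = n := by
    rw [hGtdef, natDegree_mul_C (inv_ne_zero hGlcq), hGdeg]
  have hGeq : Gq = Gt * Polynomial.C Gq.leadingCoeff := by
    rw [hGtdef, mul_assoc, ← Polynomial.C_mul, inv_mul_cancel₀ hGlcq, Polynomial.C_1, mul_one]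
  have hdvdg : Gt ∣ Fq * Pq - Polynomial.C (B : ℚ) := by
    have h1 : Fq * Pq - Polynomial.C (B : ℚ) = (-Qq) * Gq := by
      linear_combination hbez
    rw [h1, hGeq]
    exact ⟨(-Qq) * Polynomial.C Gq.leadingCoeff, by ring⟩
  have hdetg : (mulModMat n Gt Fq).det * (mulModMat n Gt Pq).det = (B : ℚ) ^ n := by
    rw [← Matrix.det_mul, ← mulModMat_mul n hg Gt hGtM hGtdeg,
      mulModMat_congr n Gt (Fq * Pq) (Polynomial.C (B : ℚ)) hGtM hdvdg,
      mulModMat_C n Gt hGtM hGtdeg, Matrix.det_smul, Matrix.det_one, mul_one, Fintype.card_fin]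
  have eq1 : |(((sylvesterMatrix f g).det : ℤ) : ℚ)| * |(((sylvesterMatrix P g).det : ℤ) : ℚ)|
      = |((g.leadingCoeff : ℤ) : ℚ)| ^ (m + P.natDegree) * (B : ℚ) ^ n := by
    have l1a := L1 f g hg
    have l1b := L1 P g hg
    rw [l1a, l1b]
    have habs2 : |(mulModMat n Gt Fq).det| * |(mulModMat n Gt Pq).det| = (B : ℚ) ^ n := by
      rw [← abs_mul, hdetg, abs_pow, abs_of_pos (by exact_mod_cast hBpos : (0:ℚ) < (B:ℚ))]
    calc (|((g.leadingCoeff : ℤ) : ℚ)| ^ m * |(mulModMat n Gt Fq).det|)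
          * (|((g.leadingCoeff : ℤ) : ℚ)| ^ P.natDegree * |(mulModMat n Gt Pq).det|)
        = (|((g.leadingCoeff : ℤ) : ℚ)| ^ m * |((g.leadingCoeff : ℤ) : ℚ)| ^ P.natDegree)
          * (|(mulModMat n Gt Fq).det| * |(mulModMat n Gt Pq).det|) := by ring
    _ = |((g.leadingCoeff : ℤ) : ℚ)| ^ (m + P.natDegree) * (B : ℚ) ^ n := by
        rw [← pow_add, habs2]
  have eqN1 : (res f g).natAbs * ((sylvesterMatrix P g).det).natAbs
      = g.leadingCoeff.natAbs ^ (m + P.natDegree) * B.natAbs ^ n := by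
    have h := eq1
    rw [← Int.cast_abs, ← Int.cast_abs, ← Int.cast_abs] at h
    rw [show (B : ℚ) = ((B.natAbs : ℤ) : ℚ) by rw [Int.natAbs_of_nonneg hBpos.le]] at h
    rw [Int.abs_eq_natAbs, Int.abs_eq_natAbs, Int.abs_eq_natAbs] at h
    rw [show res f g = (sylvesterMatrix f g).det from rfl]
    exact_mod_cast h
  have key1 : (res f g).natAbs ∣ B.natAbs ^ n * g.leadingCoeff.natAbs ^ (m + n - 1) := by
    have h1 : (res f g).natAbs ∣ g.leadingCoeff.natAbs ^ (m + P.natDegree) * B.natAbs ^ n :=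
      ⟨_, eqN1.symm⟩
    have h2 : g.leadingCoeff.natAbs ^ (m + P.natDegree) * B.natAbs ^ n
        ∣ B.natAbs ^ n * g.leadingCoeff.natAbs ^ (m + n - 1) := by
      rw [mul_comm]
      exact mul_dvd_mul dvd_rfl (pow_dvd_pow _ (by omega))
    exact h1.trans h2
  ----------------------------------------------------------------
  -- f side
  set Ft := Fq * Polynomial.C Fq.leadingCoeff⁻¹ with hFtdef
  have hFtM : Ft.Monic := monic_mul_leadingCoeff_inv hF0
  have hFtdeg : Ft.natDegree = m := by
    rw [hFtdef, natDegree_mul_C (inv_ne_zero hFlcq), hFdeg]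
  have hFeq : Fq = Ft * Polynomial.C Fq.leadingCoeff := by
    rw [hFtdef, mul_assoc, ← Polynomial.C_mul, inv_mul_cancel₀ hFlcq, Polynomial.C_1, mul_one]
  have hdvdf : Ft ∣ Gq * Qq - Polynomial.C (B : ℚ) := by
    have h1 : Gq * Qq - Polynomial.C (B : ℚ) = (-Pq) * Fq := by
      linear_combination hbez
    rw [h1, hFeq]
    exact ⟨(-Pq) * Polynomial.C Fq.leadingCoeff, by ring⟩
  have hdetf : (mulModMat m Ft Gq).det * (mulModMat m Ft Qq).det = (B : ℚ) ^ m := by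
    rw [← Matrix.det_mul, ← mulModMat_mul m hf Ft hFtM hFtdeg,
      mulModMat_congr m Ft (Gq * Qq) (Polynomial.C (B : ℚ)) hFtM hdvdf,
      mulModMat_C m Ft hFtM hFtdeg, Matrix.det_smul, Matrix.det_one, mul_one, Fintype.card_fin]
  have eq2 : |(((sylvesterMatrix f g).det : ℤ) : ℚ)| * |(((sylvesterMatrix Q f).det : ℤ) : ℚ)|
      = |((f.leadingCoeff : ℤ) : ℚ)| ^ (n + Q.natDegree) * (B : ℚ) ^ m := by
    have l2a := L2 f g hf
    have l1b := L1 Q f hf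
    rw [l2a, l1b]
    have habs2 : |(mulModMat m Ft Gq).det| * |(mulModMat m Ft Qq).det| = (B : ℚ) ^ m := by
      rw [← abs_mul, hdetf, abs_pow, abs_of_pos (by exact_mod_cast hBpos : (0:ℚ) < (B:ℚ))]
    calc (|((f.leadingCoeff : ℤ) : ℚ)| ^ n * |(mulModMat m Ft Gq).det|)
          * (|((f.leadingCoeff : ℤ) : ℚ)| ^ Q.natDegree * |(mulModMat m Ft Qq).det|)
        = (|((f.leadingCoeff : ℤ) : ℚ)| ^ n * |((f.leadingCoeff : ℤ) : ℚ)| ^ Q.natDegree)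
          * (|(mulModMat m Ft Gq).det| * |(mulModMat m Ft Qq).det|) := by ring
    _ = |((f.leadingCoeff : ℤ) : ℚ)| ^ (n + Q.natDegree) * (B : ℚ) ^ m := by
        rw [← pow_add, habs2]
  have eqN2 : (res f g).natAbs * ((sylvesterMatrix Q f).det).natAbs
      = f.leadingCoeff.natAbs ^ (n + Q.natDegree) * B.natAbs ^ m := by
    have h := eq2
    rw [← Int.cast_abs, ← Int.cast_abs, ← Int.cast_abs] at h
    rw [show (B : ℚ) = ((B.natAbs : ℤ) : ℚ) by rw [Int.natAbs_of_nonneg hBpos.le]] at h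
    rw [Int.abs_eq_natAbs, Int.abs_eq_natAbs, Int.abs_eq_natAbs] at h
    rw [show res f g = (sylvesterMatrix f g).det from rfl]
    exact_mod_cast h
  have key2 : (res f g).natAbs ∣ B.natAbs ^ m * f.leadingCoeff.natAbs ^ (m + n - 1) := by
    have h1 : (res f g).natAbs ∣ f.leadingCoeff.natAbs ^ (n + Q.natDegree) * B.natAbs ^ m :=
      ⟨_, eqN2.symm⟩
    have h2 : f.leadingCoeff.natAbs ^ (n + Q.natDegree) * B.natAbs ^ m
        ∣ B.natAbs ^ m * f.leadingCoeff.natAbs ^ (m + n - 1) := by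
      rw [mul_comm]
      exact mul_dvd_mul dvd_rfl (pow_dvd_pow _ (by omega))
    exact h1.trans h2
  ----------------------------------------------------------------
  -- combine
  have hBnat : B.natAbs ≠ 0 := Int.natAbs_ne_zero.mpr hBpos.ne'
  have hgnat : g.leadingCoeff.natAbs ≠ 0 := Int.natAbs_ne_zero.mpr hglc
  have hfnat : f.leadingCoeff.natAbs ≠ 0 := Int.natAbs_ne_zero.mpr hflc
  have hres0 : (res f g).natAbs ≠ 0 := by
    intro h
    rw [h, zero_mul] at eqN1
    have := Nat.pos_of_ne_zero (by positivity :
      g.leadingCoeff.natAbs ^ (m + P.natDegree) * B.natAbs ^ n ≠ 0)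
    omega
  have main : (res f g).natAbs ∣
      (Nat.gcd g.leadingCoeff.natAbs f.leadingCoeff.natAbs) ^ (m + n - 1)
        * B.natAbs ^ (max m n) :=
    arith_combine _ _ _ _ _ m n hres0 hBnat hgnat hfnat key1 key2
  have main' : ((res f g).natAbs : ℤ) ∣
      (((Nat.gcd g.leadingCoeff.natAbs f.leadingCoeff.natAbs) ^ (m + n - 1)
        * B.natAbs ^ (max m n) : ℕ) : ℤ) := Int.natCast_dvd_natCast.mpr main
  rw [Int.abs_eq_natAbs]
  have hrhs : (((Nat.gcd g.leadingCoeff.natAbs f.leadingCoeff.natAbs) ^ (m + n - 1)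
        * B.natAbs ^ (max m n) : ℕ) : ℤ)
      = (Int.gcd f.leadingCoeff g.leadingCoeff : ℤ) ^ (m + n - 1) * B ^ max m n := by
    have h1 : (Int.gcd f.leadingCoeff g.leadingCoeff : ℤ)
        = ((g.leadingCoeff.natAbs.gcd f.leadingCoeff.natAbs : ℕ) : ℤ) := by
      rw [Int.gcd, Nat.gcd_comm]
    rw [h1]
    push_cast
    rw [abs_of_pos hBpos]
  rw [← hrhs]
  exact main'
end

section
/- Let f and g be monic coprime integer polynomials of positive degree, deg(f) = m, deg(g) = n. Then |Res(f,g)| divides B(f,g)^{min(m,n)}. -/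
open Polynomial Matrix

noncomputable def matP (f g : Polynomial ℤ) :
    Matrix (Fin (g.natDegree + f.natDegree)) (Fin (g.natDegree + f.natDegree)) ℤ :=
  Matrix.of fun i j =>
    (if (i : ℕ) < g.natDegree then X ^ (i : ℕ) * f else X ^ ((i : ℕ) - g.natDegree) * g).coeff j

noncomputable def mulMat (f g : Polynomial ℤ) :
    Matrix (Fin g.natDegree) (Fin g.natDegree) ℤ :=
  Matrix.of fun a c => ((X ^ (a : ℕ) * f) %ₘ g).coeff c

lemma natAbs_det_submatrix {k l : ℕ} (e₁ e₂ : Fin k ≃ Fin l) (M : Matrix (Fin l) (Fin l) ℤ) :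
    ((M.submatrix e₁ e₂).det).natAbs = M.det.natAbs := by
  have h : M.submatrix ⇑e₁ ⇑e₂ = ((M.submatrix e₂ e₂).submatrix ⇑(e₁.trans e₂.symm) id) := by
    ext i j; simp
  rw [h]
  have h2 : ((M.submatrix e₂ e₂).submatrix ⇑(e₁.trans e₂.symm) id).det
      = Equiv.Perm.sign (e₁.trans e₂.symm) • (M.submatrix e₂ e₂).det :=
    Matrix.det_permute _ _
  rw [h2, Matrix.det_submatrix_equiv_self]
  rcases Int.units_eq_one_or (Equiv.Perm.sign (e₁.trans e₂.symm)) with h3 | h3 <;> simp [h3]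

/-- block-reversal permutation -/
def tau (n m : ℕ) : Fin (n + m) ≃ Fin (n + m) where
  toFun i := if h : (i : ℕ) < n then ⟨n - 1 - (i : ℕ), by omega⟩
    else ⟨n + m - 1 - ((i : ℕ) - n), by have := i.2; omega⟩
  invFun i := if h : (i : ℕ) < n then ⟨n - 1 - (i : ℕ), by omega⟩
    else ⟨n + m - 1 - ((i : ℕ) - n), by have := i.2; omega⟩
  left_inv i := by
    have := i.2
    dsimp only
    by_cases h : (i : ℕ) < n
    · rw [dif_pos h, dif_pos (show n - 1 - (i:ℕ) < n by omega)]
      exact Fin.ext (by dsimp only; omega)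
    · rw [dif_neg h, dif_neg (show ¬ (n + m - 1 - ((i:ℕ) - n) < n) by omega)]
      exact Fin.ext (by dsimp only; omega)
  right_inv i := by
    have := i.2
    dsimp only
    by_cases h : (i : ℕ) < n
    · rw [dif_pos h, dif_pos (show n - 1 - (i:ℕ) < n by omega)]
      exact Fin.ext (by dsimp only; omega)
    · rw [dif_neg h, dif_neg (show ¬ (n + m - 1 - ((i:ℕ) - n) < n) by omega)]
      exact Fin.ext (by dsimp only; omega)

lemma matP_eq_submatrix (f g : Polynomial ℤ) (hf : 0 < f.natDegree) (hg : 0 < g.natDegree)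
    (hfm : f.Monic) (hgm : g.Monic) :
    matP f g = (sylvesterMatrix f g).submatrix (tau g.natDegree f.natDegree) Fin.revPerm := by
  set n := g.natDegree
  set m := f.natDegree
  ext i j
  have hi := i.2
  have hj := j.2
  have hrev : ((Fin.revPerm j : Fin (n + m)) : ℕ) = n + m - (j + 1) := by
    simp [Fin.val_rev]
  simp only [matP, sylvesterMatrix, Matrix.submatrix_apply, Matrix.of_apply]
  by_cases h : (i : ℕ) < n
  · rw [if_pos h]
    rw [show ((tau n m) i) = ⟨n - 1 - (i:ℕ), by omega⟩ from dif_pos h]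
    rw [if_pos (show ((⟨n - 1 - (i:ℕ), by omega⟩ : Fin (n+m)) : ℕ) < n by dsimp only; omega)]
    rw [coeff_X_pow_mul']
    simp only [hrev]
    by_cases h1 : (i : ℕ) ≤ (j : ℕ)
    · by_cases h2 : (j : ℕ) ≤ (i : ℕ) + m
      · rw [if_pos h1, if_pos (by omega)]
        congr 1
        omega
      · rw [if_pos h1, if_neg (by omega)]
        exact coeff_eq_zero_of_natDegree_lt (by omega)
    · rw [if_neg h1, if_neg (by omega)]
  · rw [if_neg h]
    rw [show ((tau n m) i) = ⟨n + m - 1 - ((i:ℕ) - n), by omega⟩ from dif_neg h]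
    rw [if_neg (show ¬ ((⟨n + m - 1 - ((i:ℕ) - n), by omega⟩ : Fin (n+m)) : ℕ) < n by dsimp only; omega)]
    rw [coeff_X_pow_mul']
    simp only [hrev]
    by_cases h1 : (i : ℕ) - n ≤ (j : ℕ)
    · by_cases h2 : (j : ℕ) ≤ (i : ℕ) - n + n
      · rw [if_pos h1, if_pos (by omega)]
        congr 1
        omega
      · rw [if_pos h1, if_neg (by omega)]
        exact coeff_eq_zero_of_natDegree_lt (by omega)
    · rw [if_neg h1, if_neg (by omega)]

/-- block-swap equivalence -/
def rho (m n : ℕ) : Fin (m + n) ≃ Fin (n + m) where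
  toFun i := if h : (i : ℕ) < m then ⟨n + (i : ℕ), by omega⟩
    else ⟨(i : ℕ) - m, by have := i.2; omega⟩
  invFun j := if h : (j : ℕ) < n then ⟨m + (j : ℕ), by omega⟩
    else ⟨(j : ℕ) - n, by have := j.2; omega⟩
  left_inv i := by
    have := i.2
    dsimp only
    by_cases h : (i : ℕ) < m
    · rw [dif_pos h, dif_neg (show ¬ (n + (i:ℕ) < n) by omega)]
      exact Fin.ext (by dsimp only; omega)
    · rw [dif_neg h, dif_pos (show (i:ℕ) - m < n by omega)]
      exact Fin.ext (by dsimp only; omega)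
  right_inv j := by
    have := j.2
    dsimp only
    by_cases h : (j : ℕ) < n
    · rw [dif_pos h, dif_neg (show ¬ (m + (j:ℕ) < m) by omega)]
      exact Fin.ext (by dsimp only; omega)
    · rw [dif_neg h, dif_pos (show (j:ℕ) - n < m by omega)]
      exact Fin.ext (by dsimp only; omega)

lemma matP_swap (f g : Polynomial ℤ) :
    matP g f = (matP f g).submatrix (rho f.natDegree g.natDegree)
      (finCongr (Nat.add_comm f.natDegree g.natDegree)) := by
  ext i j
  have hi := i.2
  simp only [matP, Matrix.submatrix_apply, Matrix.of_apply, finCongr_apply, Fin.coe_cast]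
  by_cases h : (i : ℕ) < f.natDegree
  · rw [if_pos h,
      show ((rho f.natDegree g.natDegree) i) = ⟨g.natDegree + (i:ℕ), by omega⟩ from dif_pos h,
      if_neg (show ¬ (g.natDegree + (i:ℕ) < g.natDegree) by omega)]
    congr 3
    dsimp only
    omega
  · rw [if_neg h,
      show ((rho f.natDegree g.natDegree) i) = ⟨(i:ℕ) - f.natDegree, by omega⟩ from dif_neg h,
      if_pos (show (i:ℕ) - f.natDegree < g.natDegree by omega)]

lemma coeff_sum_mul (g h : Polynomial ℤ) (m : ℕ) (hh : h.natDegree < m) (j : ℕ) :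
    ∑ b : Fin m, h.coeff b * (X ^ (b : ℕ) * g).coeff j = (h * g).coeff j := by
  conv_rhs => rw [h.as_sum_range' m hh]
  rw [Finset.sum_mul, finset_sum_coeff, ← Fin.sum_univ_eq_sum_range]
  refine Finset.sum_congr rfl fun b _ => ?_
  rw [← C_mul_X_pow_eq_monomial, mul_assoc, coeff_C_mul]

lemma det_matP (f g : Polynomial ℤ) (hf : 0 < f.natDegree) (hg : 0 < g.natDegree)
    (hfm : f.Monic) (hgm : g.Monic) : (matP f g).det = (mulMat f g).det := by
  have hndiv : ∀ a : Fin g.natDegree, ((X ^ (a : ℕ) * f) /ₘ g).natDegree < f.natDegree := by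
    intro a
    rw [natDegree_divByMonic _ hgm, natDegree_mul (pow_ne_zero _ X_ne_zero) hfm.ne_zero,
      natDegree_X_pow]
    have := a.2
    omega
  set H : Matrix (Fin g.natDegree) (Fin f.natDegree) ℤ :=
    Matrix.of fun a b => ((X ^ (a : ℕ) * f) /ₘ g).coeff b with hH
  set G₁ : Matrix (Fin f.natDegree) (Fin g.natDegree) ℤ :=
    Matrix.of fun b c => (X ^ (b : ℕ) * g).coeff c with hG₁
  set G₂ : Matrix (Fin f.natDegree) (Fin f.natDegree) ℤ :=
    Matrix.of fun b c => (X ^ (b : ℕ) * g).coeff (g.natDegree + (c : ℕ)) with hG₂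
  have hsplit : ∀ (a : Fin g.natDegree) (j : ℕ), (X ^ (a : ℕ) * f).coeff j =
      ((X ^ (a : ℕ) * f) %ₘ g).coeff j +
        ∑ b : Fin f.natDegree, ((X ^ (a : ℕ) * f) /ₘ g).coeff b * (X ^ (b : ℕ) * g).coeff j := by
    intro a j
    rw [coeff_sum_mul g _ _ (hndiv a) j, ← coeff_add]
    conv_lhs => rw [← modByMonic_add_div (X ^ (a : ℕ) * f) g]
    rw [mul_comm g]
  have hmod0 : ∀ (a : Fin g.natDegree) (j : ℕ), g.natDegree ≤ j →
      ((X ^ (a : ℕ) * f) %ₘ g).coeff j = 0 := by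
    intro a j hj
    refine coeff_eq_zero_of_degree_lt (lt_of_lt_of_le (degree_modByMonic_lt _ hgm) ?_)
    exact le_trans degree_le_natDegree (Nat.cast_le.mpr hj)
  have hfac : (matP f g).submatrix finSumFinEquiv finSumFinEquiv =
      Matrix.fromBlocks 1 H 0 1 * Matrix.fromBlocks (mulMat f g) 0 G₁ G₂ := by
    rw [Matrix.fromBlocks_multiply]
    simp only [Matrix.one_mul, Matrix.mul_one, Matrix.zero_mul, Matrix.mul_zero,
      add_zero, zero_add]
    ext i j
    rcases i with a | b <;> rcases j with c | d
    · rw [Matrix.submatrix_apply, Matrix.fromBlocks_apply₁₁]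
      rw [show (finSumFinEquiv (Sum.inl a) : Fin (g.natDegree + f.natDegree)) =
        Fin.castAdd f.natDegree a from rfl,
        show (finSumFinEquiv (Sum.inl c) : Fin (g.natDegree + f.natDegree)) =
        Fin.castAdd f.natDegree c from rfl]
      rw [matP, Matrix.of_apply, if_pos (by simp [a.2] : ((Fin.castAdd f.natDegree a : Fin _) : ℕ) < g.natDegree)]
      rw [Matrix.add_apply, Matrix.mul_apply]
      simp only [Fin.coe_castAdd]
      rw [hsplit a c]
      rfl
    · rw [Matrix.submatrix_apply, Matrix.fromBlocks_apply₁₂]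
      rw [show (finSumFinEquiv (Sum.inl a) : Fin (g.natDegree + f.natDegree)) =
        Fin.castAdd f.natDegree a from rfl,
        show (finSumFinEquiv (Sum.inr d) : Fin (g.natDegree + f.natDegree)) =
        Fin.natAdd g.natDegree d from rfl]
      rw [matP, Matrix.of_apply, if_pos (by simp [a.2] : ((Fin.castAdd f.natDegree a : Fin _) : ℕ) < g.natDegree)]
      rw [Matrix.mul_apply]
      simp only [Fin.coe_castAdd, Fin.coe_natAdd]
      rw [hsplit a (g.natDegree + d), hmod0 a _ (Nat.le_add_right _ _), zero_add]
      rfl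
    · rw [Matrix.submatrix_apply, Matrix.fromBlocks_apply₂₁]
      rw [show (finSumFinEquiv (Sum.inr b) : Fin (g.natDegree + f.natDegree)) =
        Fin.natAdd g.natDegree b from rfl,
        show (finSumFinEquiv (Sum.inl c) : Fin (g.natDegree + f.natDegree)) =
        Fin.castAdd f.natDegree c from rfl]
      rw [matP, Matrix.of_apply, if_neg (by simp : ¬ ((Fin.natAdd g.natDegree b : Fin _) : ℕ) < g.natDegree)]
      simp only [Fin.coe_natAdd, Fin.coe_castAdd, Nat.add_sub_cancel_left]
      rfl
    · rw [Matrix.submatrix_apply, Matrix.fromBlocks_apply₂₂]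
      rw [show (finSumFinEquiv (Sum.inr b) : Fin (g.natDegree + f.natDegree)) =
        Fin.natAdd g.natDegree b from rfl,
        show (finSumFinEquiv (Sum.inr d) : Fin (g.natDegree + f.natDegree)) =
        Fin.natAdd g.natDegree d from rfl]
      rw [matP, Matrix.of_apply, if_neg (by simp : ¬ ((Fin.natAdd g.natDegree b : Fin _) : ℕ) < g.natDegree)]
      simp only [Fin.coe_natAdd, Nat.add_sub_cancel_left]
      rfl
  have hG₂tri : G₂.BlockTriangular OrderDual.toDual := by
    intro i j hij
    have hij' : (i : ℕ) < (j : ℕ) := hij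
    have h2 : (X ^ (i : ℕ) * g).coeff (g.natDegree + (j : ℕ)) = 0 := by
      refine coeff_eq_zero_of_natDegree_lt ?_
      rw [natDegree_mul (pow_ne_zero _ X_ne_zero) hgm.ne_zero, natDegree_X_pow]
      omega
    exact h2
  have hG₂det : G₂.det = 1 := by
    rw [Matrix.det_of_lowerTriangular G₂ hG₂tri]
    refine Finset.prod_eq_one fun b _ => ?_
    have hb : (X ^ (b : ℕ) * g).coeff (g.natDegree + (b : ℕ)) = 1 := by
      rw [coeff_X_pow_mul g (b : ℕ) g.natDegree, hgm.coeff_natDegree]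
    exact hb
  calc (matP f g).det = ((matP f g).submatrix finSumFinEquiv finSumFinEquiv).det :=
        (Matrix.det_submatrix_equiv_self _ _).symm
    _ = (Matrix.fromBlocks 1 H 0 1).det * (Matrix.fromBlocks (mulMat f g) 0 G₁ G₂).det := by
        rw [hfac, Matrix.det_mul]
    _ = (mulMat f g).det := by
        rw [Matrix.det_fromBlocks_zero₂₁, Matrix.det_fromBlocks_zero₁₂, hG₂det]
        simp

lemma mulMat_eq_leftMulMatrix (g : Polynomial ℤ) (hgm : g.Monic) (p : Polynomial ℤ) :
    mulMat p g = (Algebra.leftMulMatrix (AdjoinRoot.powerBasisAux' hgm)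
      (AdjoinRoot.mk g p))ᵀ := by
  have hb : ∀ i : Fin g.natDegree,
      (AdjoinRoot.powerBasisAux' hgm) i = AdjoinRoot.mk g (X ^ (i : ℕ)) := by
    intro i
    have h1 : (AdjoinRoot.powerBasisAux' hgm) i = AdjoinRoot.root g ^ (i : ℕ) :=
      (AdjoinRoot.powerBasis' hgm).basis_eq_pow i
    rw [h1, ← AdjoinRoot.mk_X, ← map_pow]
  ext a c
  rw [Matrix.transpose_apply, Algebra.leftMulMatrix_eq_repr_mul, hb a, ← _root_.map_mul,
    AdjoinRoot.powerBasisAux'_repr_apply_to_fun, AdjoinRoot.modByMonicHom_mk]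
  show ((X ^ (a : ℕ) * p) %ₘ g).coeff c = ((p * X ^ (a : ℕ)) %ₘ g).coeff c
  rw [mul_comm]

lemma det_mulMat_dvd (f g P Q : Polynomial ℤ) (B : ℤ) (hgm : g.Monic)
    (hPQ : P * f + Q * g = C B) : (mulMat f g).det ∣ B ^ g.natDegree := by
  have h1 : AdjoinRoot.mk g (f * P) = AdjoinRoot.mk g (C B) := by
    rw [AdjoinRoot.mk_eq_mk]
    exact ⟨-Q, by linear_combination hPQ⟩
  have hCB : (C B : Polynomial ℤ) = B • (1 : Polynomial ℤ) := by
    rw [Polynomial.smul_eq_C_mul, mul_one]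
  have hchain : (mulMat f g).det * (mulMat P g).det = B ^ g.natDegree := by
    rw [mulMat_eq_leftMulMatrix g hgm f, mulMat_eq_leftMulMatrix g hgm P,
      Matrix.det_transpose, Matrix.det_transpose, ← Matrix.det_mul, ← _root_.map_mul, ← _root_.map_mul, h1,
      hCB, map_zsmul, map_zsmul, _root_.map_one, _root_.map_one, Matrix.det_smul, Matrix.det_one,
      Fintype.card_fin, mul_one]
  exact ⟨_, hchain.symm⟩

theorem statement_17 (f g : Polynomial ℤ)
    (hf : 0 < f.natDegree) (hg : 0 < g.natDegree)
    (hcop : IsCoprime (f.map (Int.castRingHom ℚ)) (g.map (Int.castRingHom ℚ)))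
    (hfm : f.Monic) (hgm : g.Monic)
    (B : ℤ) (hB : IsBezoutDenom f g B)
    (hBmin : ∀ B' : ℤ, IsBezoutDenom f g B' → B ≤ B') :
    |res f g| ∣ B ^ min f.natDegree g.natDegree := by
  obtain ⟨hBpos, p, q, hp, hq, hpq, ⟨P, hP⟩, ⟨Q, hQ⟩⟩ := hB
  have hinj : Function.Injective (Int.castRingHom ℚ) := Int.cast_injective
  have hPQ : P * f + Q * g = C B := by
    apply Polynomial.map_injective _ hinj
    rw [Polynomial.map_add, Polynomial.map_mul, Polynomial.map_mul, hP, hQ, Polynomial.map_C]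
    rw [mul_assoc, mul_assoc, ← mul_add, hpq, mul_one]
    rfl
  have e1 : ((matP f g).det).natAbs = (res f g).natAbs := by
    rw [matP_eq_submatrix f g hf hg hfm hgm]
    exact natAbs_det_submatrix _ _ _
  have e2 : ((matP g f).det).natAbs = ((matP f g).det).natAbs := by
    rw [matP_swap f g]
    exact natAbs_det_submatrix _ _ _
  have d1 : (mulMat f g).det ∣ B ^ g.natDegree := det_mulMat_dvd f g P Q B hgm hPQ
  have d2 : (mulMat g f).det ∣ B ^ f.natDegree :=
    det_mulMat_dvd g f Q P B hfm (by rw [add_comm]; exact hPQ)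
  have r1 : res f g ∣ B ^ g.natDegree := by
    have h : (res f g).natAbs ∣ (B ^ g.natDegree).natAbs := by
      rw [← e1, det_matP f g hf hg hfm hgm]
      exact Int.natAbs_dvd_natAbs.mpr d1
    exact Int.natAbs_dvd_natAbs.mp h
  have r2 : res f g ∣ B ^ f.natDegree := by
    have h : (res f g).natAbs ∣ (B ^ f.natDegree).natAbs := by
      rw [← e1, ← e2, det_matP g f hg hf hgm hfm]
      exact Int.natAbs_dvd_natAbs.mpr d2
    exact Int.natAbs_dvd_natAbs.mp h
  rw [abs_dvd]
  rcases le_total f.natDegree g.natDegree with h | h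
  · rw [min_eq_left h]; exact r2
  · rw [min_eq_right h]; exact r1
end

section
/- Let f and g be coprime integer polynomials of positive degree with gcd(L(f), L(g)) = 1. Then B(f,g), r(f,g), and |Res(f,g)| all have the same set of prime factors. -/
open Polynomial Matrix Finset

lemma min_dvd {T : ℤ → Prop} (hT : ∀ a b z : ℤ, T a → T b → T (a - z * b))
    (r : ℤ) (hr : T r) (hrpos : 0 < r) (hmin : ∀ s, 0 < s → T s → r ≤ s)
    (s : ℤ) (hs : T s) : r ∣ s := by
  have h1 : T (s % r) := by
    rw [Int.emod_def, mul_comm]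
    exact hT s r (s / r) hs hr
  have hnn : 0 ≤ s % r := Int.emod_nonneg s (ne_of_gt hrpos)
  have hlt : s % r < r := Int.emod_lt_of_pos s hrpos
  rcases hnn.lt_or_eq with h | h
  · exact absurd (hmin _ h h1) (by omega)
  · exact Int.dvd_of_emod_eq_zero h.symm

lemma entry_eq (h : Polynomial ℤ) (d e i' j : ℕ) (hdeg : h.natDegree ≤ d)
    (hi' : i' < e) (hj : j < e + d) :
    (if i' ≤ j ∧ j ≤ i' + d then h.coeff (d + i' - j) else 0)
      = (h * X ^ (e - 1 - i')).coeff (e + d - 1 - j) := by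
  rw [coeff_mul_X_pow']
  split_ifs with h1 h2 h2
  · congr 1; omega
  · exfalso; omega
  · refine (coeff_eq_zero_of_natDegree_lt ?_).symm; omega
  · rfl

noncomputable def rowP (f g : Polynomial ℤ) (i : ℕ) : Polynomial ℤ :=
  if i < g.natDegree then f * X ^ (g.natDegree - 1 - i)
  else g * X ^ (f.natDegree - 1 - (i - g.natDegree))

lemma sylv_entry (f g : Polynomial ℤ)
    (i j : Fin (g.natDegree + f.natDegree)) :
    sylvesterMatrix f g i j
      = (rowP f g i).coeff (g.natDegree + f.natDegree - 1 - (j : ℕ)) := by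
  have hi2 := i.isLt
  have hj2 := j.isLt
  by_cases hi : (i : ℕ) < g.natDegree
  · simp only [sylvesterMatrix, Matrix.of_apply, rowP, if_pos hi]
    exact entry_eq f f.natDegree g.natDegree i j le_rfl hi hj2
  · simp only [sylvesterMatrix, Matrix.of_apply, rowP, if_neg hi]
    have hswap : g.natDegree + f.natDegree - 1 - (j : ℕ)
        = f.natDegree + g.natDegree - 1 - (j : ℕ) := by omega
    rw [hswap]
    exact entry_eq g g.natDegree f.natDegree ((i : ℕ) - g.natDegree) j le_rfl
      (by omega) (by omega)

lemma rowP_natDegree_lt (f g : Polynomial ℤ) (hf : 0 < f.natDegree) (hg : 0 < g.natDegree)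
    (i : ℕ) : (rowP f g i).natDegree < g.natDegree + f.natDegree := by
  unfold rowP
  split_ifs with hi
  · have h1 := natDegree_mul_le (p := f) (q := X ^ (g.natDegree - 1 - i))
    rw [natDegree_X_pow] at h1
    omega
  · have h1 := natDegree_mul_le (p := g) (q := X ^ (f.natDegree - 1 - (i - g.natDegree)))
    rw [natDegree_X_pow] at h1
    omega

lemma poly_as_sum {R : Type*} [Semiring R] (P : Polynomial R) (N : ℕ) (hP : P.natDegree < N) :
    P = ∑ j : Fin N, C (P.coeff (N - 1 - (j : ℕ))) * X ^ (N - 1 - (j : ℕ)) := by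
  rw [Fin.sum_univ_eq_sum_range (fun j => C (P.coeff (N - 1 - j)) * X ^ (N - 1 - j)),
    Finset.sum_range_reflect (fun j => C (P.coeff j) * X ^ j) N]
  simp_rw [C_mul_X_pow_eq_monomial]
  exact as_sum_range' P N hP

lemma master {R : Type*} [CommRing R] (φ : ℤ →+* R) (f g : Polynomial ℤ)
    (hf : 0 < f.natDegree) (hg : 0 < g.natDegree)
    (c : Fin (g.natDegree + f.natDegree) → R) :
    ∑ i, C (c i) * (rowP f g (i : ℕ)).map φ
      = ∑ j : Fin (g.natDegree + f.natDegree),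
          C (Matrix.vecMul c ((sylvesterMatrix f g).map φ) j)
            * X ^ (g.natDegree + f.natDegree - 1 - (j : ℕ)) := by
  have h1 : ∀ i : Fin (g.natDegree + f.natDegree),
      C (c i) * (rowP f g (i : ℕ)).map φ
        = ∑ j : Fin (g.natDegree + f.natDegree),
            C (c i * φ (sylvesterMatrix f g i j))
              * X ^ (g.natDegree + f.natDegree - 1 - (j : ℕ)) := by
    intro i
    rw [poly_as_sum ((rowP f g (i : ℕ)).map φ) (g.natDegree + f.natDegree)
      (lt_of_le_of_lt natDegree_map_le (rowP_natDegree_lt f g hf hg i)),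
      Finset.mul_sum]
    refine Finset.sum_congr rfl fun j _ => ?_
    rw [coeff_map, ← sylv_entry f g i j, C_mul]
    ring
  rw [Finset.sum_congr rfl fun i _ => h1 i, Finset.sum_comm]
  refine Finset.sum_congr rfl fun j _ => ?_
  rw [← Finset.sum_mul]
  have hv : Matrix.vecMul c ((sylvesterMatrix f g).map φ) j
      = ∑ i, c i * φ (sylvesterMatrix f g i j) := by
    simp [Matrix.vecMul, dotProduct, Matrix.map_apply]
  rw [hv, map_sum]

lemma split_sum {R : Type*} [CommRing R] (φ : ℤ →+* R) (f g : Polynomial ℤ)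
    (c : Fin (g.natDegree + f.natDegree) → R) :
    ∑ i, C (c i) * (rowP f g (i : ℕ)).map φ =
      (∑ i : Fin (g.natDegree + f.natDegree),
          if (i : ℕ) < g.natDegree then C (c i) * X ^ (g.natDegree - 1 - (i : ℕ)) else 0)
        * f.map φ
      + (∑ i : Fin (g.natDegree + f.natDegree),
          if (i : ℕ) < g.natDegree then 0
          else C (c i) * X ^ (f.natDegree - 1 - ((i : ℕ) - g.natDegree)))
        * g.map φ := by
  rw [Finset.sum_mul, Finset.sum_mul, ← Finset.sum_add_distrib]
  refine Finset.sum_congr rfl fun i _ => ?_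
  by_cases hi : (i : ℕ) < g.natDegree <;>
    simp only [rowP, if_pos, if_neg, hi, if_true, if_false, Polynomial.map_mul,
      Polynomial.map_pow, Polynomial.map_X, zero_mul, add_zero, zero_add] <;> ring

lemma res_bezout (f g : Polynomial ℤ) (hf : 0 < f.natDegree) (hg : 0 < g.natDegree) :
    ∃ U V : Polynomial ℤ, U * f + V * g = C (res f g) := by
  set N := g.natDegree + f.natDegree with hN
  have hN0 : 0 < N := by omega
  set k : Fin N := ⟨N - 1, by omega⟩ with hk
  set c : Fin N → ℤ := (sylvesterMatrix f g).adjugate k with hc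
  have hmat : (sylvesterMatrix f g).map (RingHom.id ℤ) = sylvesterMatrix f g := by
    ext i j; simp [Matrix.map_apply]
  have key := (split_sum (RingHom.id ℤ) f g c).symm.trans (master (RingHom.id ℤ) f g hf hg c)
  rw [Polynomial.map_id, Polynomial.map_id, hmat] at key
  refine ⟨_, _, key.trans ?_⟩
  have hrow : ∀ j, Matrix.vecMul c (sylvesterMatrix f g) j
      = res f g * (if k = j then 1 else 0) := by
    intro j
    have h2 := congrFun (congrFun (Matrix.adjugate_mul (sylvesterMatrix f g)) k) j
    rw [Matrix.mul_apply] at h2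
    simp only [Matrix.vecMul, dotProduct, hc]
    rw [h2, Matrix.smul_apply, Matrix.one_apply, res]
    simp [mul_ite]
  rw [Finset.sum_congr rfl (fun j _ => by rw [hrow j])]
  rw [Finset.sum_eq_single k]
  · simp [hk, hN]
  · intro b _ hb
    rw [if_neg (fun h => hb h.symm)]
    simp
  · intro h; exact absurd (Finset.mem_univ k) h

lemma pseudo_div (g : Polynomial ℤ) (hg : 0 < g.natDegree) (u : Polynomial ℤ) :
    ∃ (k : ℕ) (a u' : Polynomial ℤ),
      C (g.leadingCoeff ^ k) * u = a * g + u' ∧ u'.degree < g.degree := by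
  have hgne : g ≠ 0 := fun h => by simp [h] at hg
  have hdegg : 0 < g.degree := natDegree_pos_iff_degree_pos.mp hg
  have H : ∀ d : ℕ, ∀ u : Polynomial ℤ, u.natDegree ≤ d →
      ∃ (k : ℕ) (a u' : Polynomial ℤ),
        C (g.leadingCoeff ^ k) * u = a * g + u' ∧ u'.degree < g.degree := by
    intro d
    induction d with
    | zero =>
      intro u hu
      refine ⟨0, 0, u, by simp, ?_⟩
      exact lt_of_le_of_lt (degree_le_natDegree.trans (by exact_mod_cast Nat.cast_le.mpr hu))
        hdegg
    | succ d IH =>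
      intro u hu
      by_cases hlt : u.degree < g.degree
      · exact ⟨0, 0, u, by simp, hlt⟩
      · push_neg at hlt
        have hune : u ≠ 0 := by
          intro h; rw [h, degree_zero] at hlt
          exact absurd (lt_of_lt_of_le hdegg hlt) (by simp)
        have hdle : g.natDegree ≤ u.natDegree := natDegree_le_natDegree hlt
        set δ := u.natDegree - g.natDegree with hδ
        set u₁ := C g.leadingCoeff * u - C u.leadingCoeff * X ^ δ * g with hu₁
        have hq1deg : (C u.leadingCoeff * X ^ δ * g).degree = u.degree := by
          rw [degree_mul, degree_mul, degree_C (leadingCoeff_ne_zero.mpr hune),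
            degree_X_pow, degree_eq_natDegree hgne, degree_eq_natDegree hune]
          rw [zero_add, ← Nat.cast_add]
          congr 1
          omega
        have hp1deg : (C g.leadingCoeff * u).degree = u.degree := by
          rw [degree_mul, degree_C (leadingCoeff_ne_zero.mpr hgne), zero_add]
        have hlc : (C g.leadingCoeff * u).leadingCoeff
            = (C u.leadingCoeff * X ^ δ * g).leadingCoeff := by
          rw [leadingCoeff_mul, leadingCoeff_mul, leadingCoeff_mul, leadingCoeff_C,
            leadingCoeff_C, leadingCoeff_X_pow, mul_one]
          ring
        have hp1ne : C g.leadingCoeff * u ≠ 0 :=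
          mul_ne_zero (fun h => leadingCoeff_ne_zero.mpr hgne (by
            simpa using congrArg (fun p => coeff p 0) h)) hune
        have hdeglt : u₁.degree < u.degree := by
          rw [hu₁]
          calc (C g.leadingCoeff * u - C u.leadingCoeff * X ^ δ * g).degree
              < (C g.leadingCoeff * u).degree :=
                degree_sub_lt (by rw [hq1deg, hp1deg]) hp1ne hlc
            _ = u.degree := hp1deg
        by_cases h10 : u₁ = 0
        · refine ⟨1, C u.leadingCoeff * X ^ δ, 0, ?_, by rw [degree_zero]; exact bot_lt_iff_ne_bot.mpr (by simpa [degree_eq_bot] using hgne)⟩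
          have := sub_eq_zero.mp (h10 ▸ hu₁.symm)
          rw [pow_one, add_zero]
          exact this
        · have h1d : u₁.natDegree ≤ d := by
            have := natDegree_lt_natDegree h10 hdeglt
            omega
          obtain ⟨k, a, u', heq, hdeg⟩ := IH u₁ h1d
          refine ⟨k + 1, a + C (g.leadingCoeff ^ k * u.leadingCoeff) * X ^ δ, u', ?_, hdeg⟩
          have hgoal : C (g.leadingCoeff ^ (k + 1)) = C (g.leadingCoeff ^ k) * C g.leadingCoeff := by
            rw [← C_mul, pow_succ]
          rw [hgoal, C_mul]
          rw [hu₁] at heq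
          linear_combination heq
  exact H u.natDegree u le_rfl

lemma bezout_unique_s18 {K : Type*} [Field K] (F G : Polynomial K) (hcop : IsCoprime F G)
    (p q p' q' : Polynomial K) (h1 : p.degree < G.degree) (h1' : p'.degree < G.degree)
    (e : p * F + q * G = 1) (e' : p' * F + q' * G = 1) : p = p' ∧ q = q' := by
  have hGne : G ≠ 0 := by
    intro h; rw [h, degree_zero] at h1; exact absurd h1 (by simp)
  have hpp : p = p' := by
    have hdvd : G ∣ (p - p') * F := ⟨q' - q, by linear_combination e - e'⟩
    have hdvd2 : G ∣ (p - p') := hcop.symm.dvd_of_dvd_mul_right hdvd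
    by_contra hne
    have h2 := degree_le_of_dvd hdvd2 (sub_ne_zero.mpr (fun h => hne h))
    exact absurd h2 (not_le.mpr (lt_of_le_of_lt (degree_sub_le p p') (max_lt h1 h1')))
  refine ⟨hpp, ?_⟩
  have h3 : (q - q') * G = 0 := by rw [hpp] at e; linear_combination e - e'
  rcases mul_eq_zero.mp h3 with h | h
  · exact sub_eq_zero.mp h
  · exact absurd h hGne

lemma sum_ite_coeff {R : Type*} [Semiring R] {N : ℕ} (c : Fin N → R) (Q : Fin N → Prop)
    [DecidablePred Q] (d : Fin N → ℕ) (i₀ : Fin N) (hQ : Q i₀)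
    (hinj : ∀ i, Q i → d i = d i₀ → i = i₀) :
    (∑ i, if Q i then C (c i) * X ^ (d i) else 0).coeff (d i₀) = c i₀ := by
  rw [finset_sum_coeff, Finset.sum_eq_single i₀]
  · rw [if_pos hQ, coeff_C_mul, coeff_X_pow, if_pos rfl, mul_one]
  · intro i _ hne
    by_cases h : Q i
    · rw [if_pos h, coeff_C_mul, coeff_X_pow, if_neg (fun hh => hne (hinj i h hh.symm)),
        mul_zero]
    · rw [if_neg h, coeff_zero]
  · intro h; exact absurd (Finset.mem_univ i₀) h

lemma sum_ite_coeff' {R : Type*} [Semiring R] {N : ℕ} (c : Fin N → R) (Q : Fin N → Prop)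
    [DecidablePred Q] (d : Fin N → ℕ) (i₀ : Fin N) (hQ : ¬ Q i₀)
    (hinj : ∀ i, ¬ Q i → d i = d i₀ → i = i₀) :
    (∑ i, if Q i then 0 else C (c i) * X ^ (d i)).coeff (d i₀) = c i₀ := by
  rw [finset_sum_coeff, Finset.sum_eq_single i₀]
  · rw [if_neg hQ, coeff_C_mul, coeff_X_pow, if_pos rfl, mul_one]
  · intro i _ hne
    by_cases h : Q i
    · rw [if_pos h, coeff_zero]
    · rw [if_neg h, coeff_C_mul, coeff_X_pow, if_neg (fun hh => hne (hinj i h hh.symm)),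
        mul_zero]
  · intro h; exact absurd (Finset.mem_univ i₀) h

lemma not_dvd_res (f g : Polynomial ℤ) (hf : 0 < f.natDegree) (hg : 0 < g.natDegree)
    (hd : Int.gcd f.leadingCoeff g.leadingCoeff = 1)
    (r : ℤ) (u v : Polynomial ℤ) (huv : u * f + v * g = C r)
    (p : ℕ) (hp : p.Prime) (hpr : ¬ (p : ℤ) ∣ r) : ¬ (p : ℤ) ∣ res f g := by
  intro hdvd
  haveI : Fact p.Prime := ⟨hp⟩
  set φ := Int.castRingHom (ZMod p) with hφ
  have hdet : ((sylvesterMatrix f g).map φ).det = 0 := by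
    have h0 := RingHom.map_det φ (sylvesterMatrix f g)
    rw [RingHom.mapMatrix_apply] at h0
    rw [← h0]
    exact (ZMod.intCast_zmod_eq_zero_iff_dvd _ p).mpr hdvd
  obtain ⟨c, hc0, hcv⟩ := (Matrix.exists_vecMul_eq_zero_iff).mpr hdet
  set U : Polynomial (ZMod p) := ∑ i : Fin (g.natDegree + f.natDegree),
    if (i : ℕ) < g.natDegree then C (c i) * X ^ (g.natDegree - 1 - (i : ℕ)) else 0 with hU
  set V : Polynomial (ZMod p) := ∑ i : Fin (g.natDegree + f.natDegree),
    if (i : ℕ) < g.natDegree then 0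
    else C (c i) * X ^ (f.natDegree - 1 - ((i : ℕ) - g.natDegree)) with hV
  have hUV : U * f.map φ + V * g.map φ = 0 := by
    rw [hU, hV, ← split_sum φ f g c, master φ f g hf hg c]
    simp [hcv]
  have hrne : ((r : ℤ) : ZMod p) ≠ 0 := fun h =>
    hpr ((ZMod.intCast_zmod_eq_zero_iff_dvd _ p).mp h)
  have hmapid : (u.map φ) * f.map φ + (v.map φ) * g.map φ = C ((r : ZMod p)) := by
    rw [← Polynomial.map_mul, ← Polynomial.map_mul, ← Polynomial.map_add, huv,
      Polynomial.map_C]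
    rfl
  have hCrinv : C (((r : ℤ) : ZMod p))⁻¹ * C (((r : ℤ) : ZMod p)) = 1 := by
    rw [← C_mul, inv_mul_cancel₀ hrne, C_1]
  have hcopbar : IsCoprime (f.map φ) (g.map φ) :=
    ⟨C (((r : ℤ) : ZMod p))⁻¹ * u.map φ, C (((r : ℤ) : ZMod p))⁻¹ * v.map φ, by
      linear_combination C (((r : ℤ) : ZMod p))⁻¹ * hmapid + hCrinv⟩
  have hcase : ¬ (p : ℤ) ∣ f.leadingCoeff ∨ ¬ (p : ℤ) ∣ g.leadingCoeff := by
    by_contra h; push_neg at h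
    have h2 : (p : ℤ) ∣ (Int.gcd f.leadingCoeff g.leadingCoeff : ℤ) := Int.dvd_coe_gcd h.1 h.2
    rw [hd] at h2
    have h3 := Int.isUnit_iff.mp (isUnit_of_dvd_one h2)
    have h4 := hp.two_le
    omega
  have hUdeg : U.natDegree ≤ g.natDegree - 1 := by
    rw [hU]
    refine natDegree_sum_le_of_forall_le _ _ (fun i _ => ?_)
    split_ifs with h
    · exact (natDegree_C_mul_X_pow_le _ _).trans (by omega)
    · simp
  have hVdeg : V.natDegree ≤ f.natDegree - 1 := by
    rw [hV]
    refine natDegree_sum_le_of_forall_le _ _ (fun i _ => ?_)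
    split_ifs with h
    · simp
    · exact (natDegree_C_mul_X_pow_le _ _).trans (by omega)
  have hUV0 : U = 0 ∧ V = 0 := by
    rcases hcase with hLf | hLg
    · have hφLf : φ f.leadingCoeff ≠ 0 := fun h =>
        hLf ((ZMod.intCast_zmod_eq_zero_iff_dvd _ p).mp h)
      have hfdeg : (f.map φ).natDegree = f.natDegree :=
        natDegree_map_of_leadingCoeff_ne_zero φ hφLf
      have hfne : f.map φ ≠ 0 := fun h => by rw [h, natDegree_zero] at hfdeg; omega
      have hdvdV : f.map φ ∣ V :=
        hcopbar.dvd_of_dvd_mul_right ⟨-U, by linear_combination hUV⟩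
      have hV0 : V = 0 := by
        by_contra hVne
        have := natDegree_le_of_dvd hdvdV hVne
        omega
      have hU0 : U = 0 := by
        have h5 : U * f.map φ = 0 := by rw [hV0, zero_mul, add_zero] at hUV; exact hUV
        rcases mul_eq_zero.mp h5 with h | h
        · exact h
        · exact absurd h hfne
      exact ⟨hU0, hV0⟩
    · have hφLg : φ g.leadingCoeff ≠ 0 := fun h =>
        hLg ((ZMod.intCast_zmod_eq_zero_iff_dvd _ p).mp h)
      have hgdeg : (g.map φ).natDegree = g.natDegree :=
        natDegree_map_of_leadingCoeff_ne_zero φ hφLg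
      have hgne : g.map φ ≠ 0 := fun h => by rw [h, natDegree_zero] at hgdeg; omega
      have hdvdU : g.map φ ∣ U :=
        hcopbar.symm.dvd_of_dvd_mul_right ⟨-V, by linear_combination hUV⟩
      have hU0 : U = 0 := by
        by_contra hUne
        have := natDegree_le_of_dvd hdvdU hUne
        omega
      have hV0 : V = 0 := by
        have h5 : V * g.map φ = 0 := by rw [hU0, zero_mul, zero_add] at hUV; exact hUV
        rcases mul_eq_zero.mp h5 with h | h
        · exact h
        · exact absurd h hgne
      exact ⟨hU0, hV0⟩
  apply hc0
  funext i
  have hiLt := i.isLt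
  by_cases hi : (i : ℕ) < g.natDegree
  · have h6 := sum_ite_coeff c (fun i => (i : ℕ) < g.natDegree)
      (fun i => g.natDegree - 1 - (i : ℕ)) i hi
      (fun i' h1 h2 => Fin.ext (by
        have h2' : g.natDegree - 1 - (i' : ℕ) = g.natDegree - 1 - (i : ℕ) := h2
        have := i'.isLt; omega))
    rw [← hU, hUV0.1, coeff_zero] at h6
    exact h6.symm
  · have h6 := sum_ite_coeff' c (fun i => (i : ℕ) < g.natDegree)
      (fun i => f.natDegree - 1 - ((i : ℕ) - g.natDegree)) i hi
      (fun i' h1 h2 => Fin.ext (by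
        have h2' : f.natDegree - 1 - ((i' : ℕ) - g.natDegree)
            = f.natDegree - 1 - ((i : ℕ) - g.natDegree) := h2
        have := i'.isLt; omega))
    rw [← hV, hUV0.2, coeff_zero] at h6
    exact h6.symm

theorem statement_18 (f g : Polynomial ℤ)
    (hf : 0 < f.natDegree) (hg : 0 < g.natDegree)
    (hcop : IsCoprime (f.map (Int.castRingHom ℚ)) (g.map (Int.castRingHom ℚ)))
    (r : ℤ) (hrpos : 0 < r)
    (hrmem : ∃ u v : Polynomial ℤ, u * f + v * g = Polynomial.C r)
    (hrmin : ∀ s : ℤ, 0 < s →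
      (∃ u v : Polynomial ℤ, u * f + v * g = Polynomial.C s) → r ≤ s)
    (B : ℤ) (hB : IsBezoutDenom f g B)
    (hBmin : ∀ B' : ℤ, IsBezoutDenom f g B' → B ≤ B')
    (hd : Int.gcd f.leadingCoeff g.leadingCoeff = 1) :
    ∀ p : ℕ, p.Prime →
      (((p : ℤ) ∣ B ↔ (p : ℤ) ∣ r) ∧ ((p : ℤ) ∣ r ↔ (p : ℤ) ∣ |res f g|)) := by
  have hρinj : Function.Injective (Int.castRingHom ℚ) := Int.cast_injective
  have hfne : f ≠ 0 := fun h => by simp [h] at hf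
  have hgne : g ≠ 0 := fun h => by simp [h] at hg
  obtain ⟨hBpos, pp, qq, hdegp, hdegq, hpq, hPex, hQex⟩ := hB
  obtain ⟨u, v, huv⟩ := hrmem
  -- the ideal T of constants expressible as integer combinations
  have hTsub : ∀ a b z : ℤ, (∃ u v : Polynomial ℤ, u * f + v * g = C a) →
      (∃ u v : Polynomial ℤ, u * f + v * g = C b) →
      (∃ u v : Polynomial ℤ, u * f + v * g = C (a - z * b)) := by
    rintro a b z ⟨ua, va, ha⟩ ⟨ub, vb, hb⟩
    refine ⟨ua - C z * ub, va - C z * vb, ?_⟩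
    rw [C_sub, C_mul]
    linear_combination ha - C z * hb
  have hrdvd : ∀ s, (∃ u v : Polynomial ℤ, u * f + v * g = C s) → r ∣ s :=
    fun s hs => min_dvd hTsub r ⟨u, v, huv⟩ hrpos (fun s hs' hTs => hrmin s hs' hTs) s hs
  -- the ideal I of denominators of the Bezout pair (pp, qq)
  set I : ℤ → Prop := fun s =>
    (∃ P : Polynomial ℤ, P.map (Int.castRingHom ℚ) = C (s : ℚ) * pp) ∧
    (∃ Q : Polynomial ℤ, Q.map (Int.castRingHom ℚ) = C (s : ℚ) * qq) with hI
  have hIsub : ∀ a b z : ℤ, I a → I b → I (a - z * b) := by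
    rintro a b z ⟨⟨Pa, hPa⟩, ⟨Qa, hQa⟩⟩ ⟨⟨Pb, hPb⟩, ⟨Qb, hQb⟩⟩
    constructor
    · refine ⟨Pa - C z * Pb, ?_⟩
      rw [Polynomial.map_sub, Polynomial.map_mul, Polynomial.map_C, hPa, hPb,
        show ((a - z * b : ℤ) : ℚ) = (a : ℚ) - (z : ℚ) * (b : ℚ) by push_cast; ring,
        show ((Int.castRingHom ℚ) z : ℚ) = (z : ℚ) from rfl, C_sub, C_mul]
      ring
    · refine ⟨Qa - C z * Qb, ?_⟩
      rw [Polynomial.map_sub, Polynomial.map_mul, Polynomial.map_C, hQa, hQb,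
        show ((a - z * b : ℤ) : ℚ) = (a : ℚ) - (z : ℚ) * (b : ℚ) by push_cast; ring,
        show ((Int.castRingHom ℚ) z : ℚ) = (z : ℚ) from rfl, C_sub, C_mul]
      ring
  have hBI : I B := ⟨hPex, hQex⟩
  have hBdvd : ∀ s, I s → B ∣ s := by
    intro s hs
    refine min_dvd hIsub B hBI hBpos (fun s' hs' hIs' => hBmin s' ?_) s hs
    exact ⟨hs', pp, qq, hdegp, hdegq, hpq, hIs'.1, hIs'.2⟩
  -- r divides B
  have hrB : r ∣ B := by
    apply hrdvd
    obtain ⟨P, hP⟩ := hPex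
    obtain ⟨Q, hQ⟩ := hQex
    refine ⟨P, Q, Polynomial.map_injective (Int.castRingHom ℚ) hρinj ?_⟩
    rw [Polynomial.map_add, Polynomial.map_mul, Polynomial.map_mul, hP, hQ,
      Polynomial.map_C, show ((Int.castRingHom ℚ) B : ℚ) = (B : ℚ) from rfl]
    linear_combination (C (B : ℚ)) * hpq
  -- r divides the resultant
  have hrres : r ∣ res f g := hrdvd _ (res_bezout f g hf hg)
  intro p hp
  have hpprime : Prime (p : ℤ) := Int.prime_iff_natAbs_prime.mpr (by simpa using hp)
  have hcase : ¬ (p : ℤ) ∣ f.leadingCoeff ∨ ¬ (p : ℤ) ∣ g.leadingCoeff := by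
    by_contra h; push_neg at h
    have h2 : (p : ℤ) ∣ (Int.gcd f.leadingCoeff g.leadingCoeff : ℤ) := Int.dvd_coe_gcd h.1 h.2
    rw [hd] at h2
    have h3 := Int.isUnit_iff.mp (isUnit_of_dvd_one h2)
    have h4 := hp.two_le
    omega
  -- key: if p does not divide r then p does not divide B
  have hkey : ¬ (p : ℤ) ∣ r → ¬ (p : ℤ) ∣ B := by
    intro hpr hpB
    rcases hcase with hLf | hLg
    · -- p does not divide the leading coefficient of f : reduce v modulo f
      obtain ⟨k, a, v', heq, hdeg'⟩ := pseudo_div f hf v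
      set s := f.leadingCoeff ^ k * r with hs
      have hsne : s ≠ 0 :=
        mul_ne_zero (pow_ne_zero _ (leadingCoeff_ne_zero.mpr hfne)) (ne_of_gt hrpos)
      have hids : (C (f.leadingCoeff ^ k) * u + a * g) * f + v' * g = C s := by
        rw [hs, C_mul]
        linear_combination C (f.leadingCoeff ^ k) * huv - g * heq
      have hsQ : (s : ℚ) ≠ 0 := Int.cast_ne_zero.mpr hsne
      have hCs : C ((s : ℚ))⁻¹ * C ((s : ℚ)) = 1 := by
        rw [← C_mul, inv_mul_cancel₀ hsQ, C_1]
      have hmapid : (C (f.leadingCoeff ^ k) * u + a * g).map (Int.castRingHom ℚ)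
            * f.map (Int.castRingHom ℚ)
          + v'.map (Int.castRingHom ℚ) * g.map (Int.castRingHom ℚ) = C ((s : ℚ)) := by
        rw [← Polynomial.map_mul, ← Polynomial.map_mul, ← Polynomial.map_add, hids,
          Polynomial.map_C]
        rfl
      have hid' : (C ((s : ℚ))⁻¹ * v'.map (Int.castRingHom ℚ)) * g.map (Int.castRingHom ℚ)
          + (C ((s : ℚ))⁻¹ * (C (f.leadingCoeff ^ k) * u + a * g).map (Int.castRingHom ℚ))
            * f.map (Int.castRingHom ℚ) = 1 := by
        linear_combination C ((s : ℚ))⁻¹ * hmapid + hCs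
      have hdegQ' : (C ((s : ℚ))⁻¹ * v'.map (Int.castRingHom ℚ)).degree
          < (f.map (Int.castRingHom ℚ)).degree := by
        rw [degree_C_mul (inv_ne_zero hsQ)]
        calc (v'.map (Int.castRingHom ℚ)).degree ≤ v'.degree := degree_map_le
          _ < f.degree := hdeg'
          _ = (f.map (Int.castRingHom ℚ)).degree :=
            (degree_map_eq_of_injective hρinj f).symm
      obtain ⟨hq_eq, hp_eq⟩ := bezout_unique_s18 (g.map (Int.castRingHom ℚ))
        (f.map (Int.castRingHom ℚ)) hcop.symm qq pp
        (C ((s : ℚ))⁻¹ * v'.map (Int.castRingHom ℚ))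
        (C ((s : ℚ))⁻¹ * (C (f.leadingCoeff ^ k) * u + a * g).map (Int.castRingHom ℚ))
        hdegq hdegQ' (by linear_combination hpq) hid'
      have hsI : I s := by
        constructor
        · refine ⟨C (f.leadingCoeff ^ k) * u + a * g, ?_⟩
          rw [hp_eq, ← mul_assoc, ← C_mul, mul_inv_cancel₀ hsQ, C_1, one_mul]
        · refine ⟨v', ?_⟩
          rw [hq_eq, ← mul_assoc, ← C_mul, mul_inv_cancel₀ hsQ, C_1, one_mul]
      have hps : (p : ℤ) ∣ s := dvd_trans hpB (hBdvd s hsI)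
      rcases hpprime.dvd_mul.mp (hs ▸ hps) with h | h
      · exact hLf (hpprime.dvd_of_dvd_pow h)
      · exact hpr h
    · -- p does not divide the leading coefficient of g : reduce u modulo g
      obtain ⟨k, a, u', heq, hdeg'⟩ := pseudo_div g hg u
      set s := g.leadingCoeff ^ k * r with hs
      have hsne : s ≠ 0 :=
        mul_ne_zero (pow_ne_zero _ (leadingCoeff_ne_zero.mpr hgne)) (ne_of_gt hrpos)
      have hids : u' * f + (a * f + C (g.leadingCoeff ^ k) * v) * g = C s := by
        rw [hs, C_mul]
        linear_combination C (g.leadingCoeff ^ k) * huv - f * heq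
      have hsQ : (s : ℚ) ≠ 0 := Int.cast_ne_zero.mpr hsne
      have hCs : C ((s : ℚ))⁻¹ * C ((s : ℚ)) = 1 := by
        rw [← C_mul, inv_mul_cancel₀ hsQ, C_1]
      have hmapid : u'.map (Int.castRingHom ℚ) * f.map (Int.castRingHom ℚ)
          + (a * f + C (g.leadingCoeff ^ k) * v).map (Int.castRingHom ℚ)
            * g.map (Int.castRingHom ℚ) = C ((s : ℚ)) := by
        rw [← Polynomial.map_mul, ← Polynomial.map_mul, ← Polynomial.map_add, hids,
          Polynomial.map_C]
        rfl
      have hid' : (C ((s : ℚ))⁻¹ * u'.map (Int.castRingHom ℚ)) * f.map (Int.castRingHom ℚ)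
          + (C ((s : ℚ))⁻¹ * (a * f + C (g.leadingCoeff ^ k) * v).map (Int.castRingHom ℚ))
            * g.map (Int.castRingHom ℚ) = 1 := by
        linear_combination C ((s : ℚ))⁻¹ * hmapid + hCs
      have hdegP' : (C ((s : ℚ))⁻¹ * u'.map (Int.castRingHom ℚ)).degree
          < (g.map (Int.castRingHom ℚ)).degree := by
        rw [degree_C_mul (inv_ne_zero hsQ)]
        calc (u'.map (Int.castRingHom ℚ)).degree ≤ u'.degree := degree_map_le
          _ < g.degree := hdeg'
          _ = (g.map (Int.castRingHom ℚ)).degree :=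
            (degree_map_eq_of_injective hρinj g).symm
      obtain ⟨hp_eq, hq_eq⟩ := bezout_unique_s18 (f.map (Int.castRingHom ℚ))
        (g.map (Int.castRingHom ℚ)) hcop pp qq
        (C ((s : ℚ))⁻¹ * u'.map (Int.castRingHom ℚ))
        (C ((s : ℚ))⁻¹ * (a * f + C (g.leadingCoeff ^ k) * v).map (Int.castRingHom ℚ))
        hdegp hdegP' hpq hid'
      have hsI : I s := by
        constructor
        · refine ⟨u', ?_⟩
          rw [hp_eq, ← mul_assoc, ← C_mul, mul_inv_cancel₀ hsQ, C_1, one_mul]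
        · refine ⟨a * f + C (g.leadingCoeff ^ k) * v, ?_⟩
          rw [hq_eq, ← mul_assoc, ← C_mul, mul_inv_cancel₀ hsQ, C_1, one_mul]
      have hps : (p : ℤ) ∣ s := dvd_trans hpB (hBdvd s hsI)
      rcases hpprime.dvd_mul.mp (hs ▸ hps) with h | h
      · exact hLg (hpprime.dvd_of_dvd_pow h)
      · exact hpr h
  refine ⟨⟨fun h => ?_, fun h => dvd_trans h hrB⟩,
    ⟨fun h => (dvd_abs _ _).mpr (dvd_trans h hrres), fun h => ?_⟩⟩
  · by_contra hpr
    exact hkey hpr h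
  · by_contra hpr
    exact not_dvd_res f g hf hg hd r u v huv p hp hpr ((dvd_abs _ _).mp h)
end

section
/- Let f(x) = a·x + b and g(x) = c·x + e be coprime integer polynomials of degree one (a ≠ 0, c ≠ 0, and a·e − b·c ≠ 0). Then |Res(f,g)| = |a·e − b·c| and B(f,g) = |a·e − b·c| / gcd(a,c); in particular, if gcd(a,c) = 1 then B(f,g) = |Res(f,g)|. -/
open Polynomial

lemma res_linear (a b c e : ℤ) (f g : Polynomial ℤ)
    (hfe : f = Polynomial.C a * Polynomial.X + Polynomial.C b)
    (hge : g = Polynomial.C c * Polynomial.X + Polynomial.C e)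
    (ha : a ≠ 0) (hc : c ≠ 0) :
    res f g = a * e - b * c := by
  have hf1 : f.natDegree = 1 := by rw [hfe]; compute_degree!
  have hg1 : g.natDegree = 1 := by rw [hge]; compute_degree!
  have hfc1 : f.coeff 1 = a := by rw [hfe, coeff_add, coeff_C_mul, coeff_X_one, coeff_C]; simp
  have hfc0 : f.coeff 0 = b := by simp [hfe, coeff_C]
  have hgc1 : g.coeff 1 = c := by rw [hge, coeff_add, coeff_C_mul, coeff_X_one, coeff_C]; simp
  have hgc0 : g.coeff 0 = e := by simp [hge, coeff_C]
  have h2 : g.natDegree + f.natDegree = 2 := by rw [hf1, hg1]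
  rw [res]
  rw [← Matrix.det_reindex_self (finCongr h2) (sylvesterMatrix f g)]
  rw [Matrix.det_fin_two]
  simp [Matrix.reindex_apply, sylvesterMatrix, finCongr, hf1, hg1, hfc1, hfc0, hgc1, hgc0]

lemma mapf (a b : ℤ) (f : Polynomial ℤ) (hfe : f = Polynomial.C a * Polynomial.X + Polynomial.C b) :
    f.map (Int.castRingHom ℚ) = Polynomial.C (a:ℚ) * Polynomial.X + Polynomial.C (b:ℚ) := by
  simp [hfe]

lemma degf (a b : ℤ) (ha : a ≠ 0) (f : Polynomial ℤ)
    (hfe : f = Polynomial.C a * Polynomial.X + Polynomial.C b) :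
    (f.map (Int.castRingHom ℚ)).degree = 1 := by
  rw [mapf a b f hfe]
  exact degree_linear (by exact_mod_cast ha)

lemma bezout_exists (a b c e : ℤ) (ha : a ≠ 0) (hc : c ≠ 0) (hdet : a * e - b * c ≠ 0)
    (f g : Polynomial ℤ)
    (hfe : f = Polynomial.C a * Polynomial.X + Polynomial.C b)
    (hge : g = Polynomial.C c * Polynomial.X + Polynomial.C e) :
    IsBezoutDenom f g (|a*e-b*c| / (Int.gcd a c : ℤ)) := by
  set D : ℤ := a*e-b*c with hD
  set gd : ℤ := (Int.gcd a c : ℤ) with hgd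
  have hgdpos : 0 < gd := by
    have h := Int.gcd_pos_of_ne_zero_left c ha
    simp only [hgd]
    exact_mod_cast h
  have hgdD : gd ∣ |D| := by
    apply (dvd_abs _ _).mpr
    exact Dvd.dvd.sub (Dvd.dvd.mul_right (Int.gcd_dvd_left a c) e)
      (Dvd.dvd.mul_left (Int.gcd_dvd_right a c) b)
  set B' : ℤ := |D| / gd with hB'
  have hBg : B' * gd = |D| := Int.ediv_mul_cancel hgdD
  have hB'pos : 0 < B' := by
    rcases (lt_or_ge 0 B') with h | h
    · exact h
    · exfalso
      have : B' * gd ≤ 0 := mul_nonpos_iff.mpr (Or.inr ⟨h, le_of_lt hgdpos⟩)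
      rw [hBg] at this
      exact absurd (abs_nonneg D) (not_le.mpr (lt_of_le_of_ne this (abs_ne_zero.mpr hdet)))
  have hDQ : ((a:ℚ)*e - b*c) ≠ 0 := by exact_mod_cast hdet
  refine ⟨hB'pos, C (-(c:ℚ)/((a:ℚ)*e - b*c)), C ((a:ℚ)/((a:ℚ)*e - b*c)), ?_, ?_, ?_, ?_, ?_⟩
  · rw [degf c e hc g hge]
    exact lt_of_le_of_lt (degree_C_le) (by norm_num)
  · rw [degf a b ha f hfe]
    exact lt_of_le_of_lt (degree_C_le) (by norm_num)
  · rw [mapf a b f hfe, mapf c e g hge]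
    have expand : C (-(c:ℚ)/((a:ℚ)*e - b*c)) * (C (a:ℚ) * X + C (b:ℚ)) +
        C ((a:ℚ)/((a:ℚ)*e - b*c)) * (C (c:ℚ) * X + C (e:ℚ)) =
        C ((-(c:ℚ)/((a:ℚ)*e - b*c)) * a + ((a:ℚ)/((a:ℚ)*e - b*c)) * c) * X +
        C ((-(c:ℚ)/((a:ℚ)*e - b*c)) * b + ((a:ℚ)/((a:ℚ)*e - b*c)) * e) := by
      simp only [map_add, map_mul, map_neg, map_div₀, map_sub]
      ring
    rw [expand]
    have k1 : (-(c:ℚ)/((a:ℚ)*e - b*c)) * a + ((a:ℚ)/((a:ℚ)*e - b*c)) * c = 0 := by ring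
    have k2 : (-(c:ℚ)/((a:ℚ)*e - b*c)) * b + ((a:ℚ)/((a:ℚ)*e - b*c)) * e = 1 := by
      rw [div_mul_eq_mul_div, div_mul_eq_mul_div, ← add_div, div_eq_one_iff_eq hDQ]
      ring
    rw [k1, k2]
    simp
  · have hdvd : D ∣ B' * c := by
      refine (abs_dvd D (B'*c)).mp ?_
      rw [← hBg]
      exact mul_dvd_mul_left B' (Int.gcd_dvd_right a c)
    obtain ⟨k, hk⟩ := hdvd
    refine ⟨C (-k), ?_⟩
    rw [map_C, ← C_mul]
    congr 1
    simp only [eq_intCast]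
    rw [mul_div_assoc']
    rw [eq_div_iff hDQ]
    push_cast
    have h2 : (B':ℚ) * c = ((a:ℚ)*e - b*c) * k := by
      have h3 := hk
      simp only [hD] at h3
      exact_mod_cast h3
    linear_combination h2
  · have hdvd : D ∣ B' * a := by
      refine (abs_dvd D (B'*a)).mp ?_
      rw [← hBg]
      exact mul_dvd_mul_left B' (Int.gcd_dvd_left a c)
    obtain ⟨k, hk⟩ := hdvd
    refine ⟨C k, ?_⟩
    rw [map_C, ← C_mul]
    congr 1
    simp only [eq_intCast]
    rw [mul_div_assoc', eq_div_iff hDQ]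
    have h2 : (B':ℚ) * a = ((a:ℚ)*e - b*c) * k := by
      have h3 := hk
      simp only [hD] at h3
      exact_mod_cast h3
    linear_combination -h2

lemma bezout_dvd (a b c e B : ℤ) (ha : a ≠ 0) (hc : c ≠ 0) (hdet : a * e - b * c ≠ 0)
    (f g : Polynomial ℤ)
    (hfe : f = Polynomial.C a * Polynomial.X + Polynomial.C b)
    (hge : g = Polynomial.C c * Polynomial.X + Polynomial.C e)
    (hB : IsBezoutDenom f g B) :
    (a*e-b*c) ∣ B*c ∧ (a*e-b*c) ∣ B*a := by
  obtain ⟨hBpos, p, q, hp, hq, heq, ⟨P, hP⟩, ⟨Q, hQ⟩⟩ := hB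
  rw [degf c e hc g hge] at hp
  rw [degf a b ha f hfe] at hq
  have hD : ((a:ℚ)*e - b*c) ≠ 0 := by exact_mod_cast hdet
  have hp' : p = C (p.coeff 0) :=
    eq_C_of_degree_le_zero (Nat.WithBot.lt_one_iff_le_zero.mp hp)
  have hq' : q = C (q.coeff 0) :=
    eq_C_of_degree_le_zero (Nat.WithBot.lt_one_iff_le_zero.mp hq)
  set p0 := p.coeff 0
  set q0 := q.coeff 0
  rw [hp', hq', mapf a b f hfe, mapf c e g hge] at heq
  have h1 : p0 * a + q0 * c = 0 := by
    have h := congrArg (fun r => r.coeff 1) heq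
    simp only [coeff_add, coeff_C_mul, coeff_X_one, coeff_C, coeff_one] at h
    norm_num at h
    linarith
  have h0 : p0 * b + q0 * e = 1 := by
    have h := congrArg (fun r => r.coeff 0) heq
    simp only [coeff_add, coeff_C_mul, coeff_X_one, coeff_C, coeff_one, coeff_X_zero] at h
    norm_num at h
    linarith
  have hp0 : p0 * ((a:ℚ)*e - b*c) = -c := by linear_combination (e:ℚ) * h1 - (c:ℚ) * h0
  have hq0 : q0 * ((a:ℚ)*e - b*c) = a := by linear_combination (a:ℚ) * h0 - (b:ℚ) * h1
  have hP0 : ((P.coeff 0 : ℤ) : ℚ) = B * p0 := by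
    have := congrArg (fun r => r.coeff 0) hP
    simpa [hp', coeff_map, coeff_C_mul, coeff_C] using this
  have hQ0 : ((Q.coeff 0 : ℤ) : ℚ) = B * q0 := by
    have := congrArg (fun r => r.coeff 0) hQ
    simpa [hq', coeff_map, coeff_C_mul, coeff_C] using this
  constructor
  · refine ⟨-(P.coeff 0), ?_⟩
    have : ((B*c : ℤ) : ℚ) = (((a*e-b*c) * -(P.coeff 0) : ℤ) : ℚ) := by
      push_cast
      rw [hP0]
      linear_combination (B:ℚ) * hp0
    exact_mod_cast this
  · refine ⟨Q.coeff 0, ?_⟩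
    have : ((B*a : ℤ) : ℚ) = (((a*e-b*c) * Q.coeff 0 : ℤ) : ℚ) := by
      push_cast
      rw [hQ0]
      linear_combination (-(B:ℚ)) * hq0
    exact_mod_cast this

theorem statement_19 (a b c e : ℤ) (ha : a ≠ 0) (hc : c ≠ 0) (hdet : a * e - b * c ≠ 0)
    (f g : Polynomial ℤ)
    (hfe : f = Polynomial.C a * Polynomial.X + Polynomial.C b)
    (hge : g = Polynomial.C c * Polynomial.X + Polynomial.C e)
    (B : ℤ) (hB : IsBezoutDenom f g B)
    (hBmin : ∀ B' : ℤ, IsBezoutDenom f g B' → B ≤ B') :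
    |res f g| = |a * e - b * c| ∧
      B * (Int.gcd a c : ℤ) = |a * e - b * c| ∧
      (Int.gcd a c = 1 → B = |res f g|) := by
  have hres : res f g = a * e - b * c := res_linear a b c e f g hfe hge ha hc
  have habs : |res f g| = |a * e - b * c| := by rw [hres]
  set gd : ℤ := (Int.gcd a c : ℤ) with hgd
  have hgdpos : 0 < gd := by
    have h := Int.gcd_pos_of_ne_zero_left c ha
    simp only [hgd]
    exact_mod_cast h
  obtain ⟨hdc, hda⟩ := bezout_dvd a b c e B ha hc hdet f g hfe hge hB
  have hex := bezout_exists a b c e ha hc hdet f g hfe hge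
  have hle : B ≤ |a*e-b*c| / gd := hBmin _ hex
  have hgdD : gd ∣ |a*e-b*c| := by
    apply (dvd_abs _ _).mpr
    exact Dvd.dvd.sub (Dvd.dvd.mul_right (Int.gcd_dvd_left a c) e)
      (Dvd.dvd.mul_left (Int.gcd_dvd_right a c) b)
  have hBg : |a*e-b*c| / gd * gd = |a*e-b*c| := Int.ediv_mul_cancel hgdD
  have hBpos : 0 < B := hB.1
  have h1 : (a*e-b*c) ∣ B * gd := by
    have h := Int.dvd_coe_gcd hda hdc
    rw [Int.gcd_mul_left] at h
    have heq2 : ((B.natAbs * Int.gcd a c : ℕ) : ℤ) = B * gd := by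
      push_cast
      simp [abs_of_pos hBpos, hgd]
    rwa [heq2] at h
  have hub : |a*e-b*c| ≤ B * gd :=
    Int.le_of_dvd (by positivity) ((abs_dvd _ _).mpr h1)
  have hlb : B * gd ≤ |a*e-b*c| := by
    calc B * gd ≤ (|a*e-b*c| / gd) * gd := by
          exact mul_le_mul_of_nonneg_right hle (le_of_lt hgdpos)
      _ = |a*e-b*c| := hBg
  have hkey : B * gd = |a*e-b*c| := le_antisymm hlb hub
  refine ⟨habs, hkey, fun hgc1 => ?_⟩
  rw [habs, ← hkey, hgd, hgc1]
  simp
end
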